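/- For a partition λ with at most n rows, the set SVT^n(λ) together with the operators e_i, f_i (1 ≤ i < n) and the weight map wt satisfies the axioms of an abstract U_q(sl_n)-crystal: (1) for T, T' ∈ SVT^n(λ), f_i T = T' if and only if e_i T' = T; (2) if f_i T ≠ 0 then wt(f_i T) = wt(T) − α_i, where α_i ∈ ℤ^n is the vector with 1 in position i, −1 in position i+1, and 0 elsewhere; (3) the quantities ε_i(T) = max{m ≥ 0 : e_i^m T ≠ 0} and φ_i(T) = max{m ≥ 0 : f_i^m T ≠ 0} are finite and satisfy φ_i(T) = ε_i(T) + wt(T)_i − wt(T)_{i+1}. -/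

import Mathlib

open scoped Classical

noncomputable section

namespace SVTCrystal

/-- A filling assigns to each (row, column) position (0-indexed) a finite set of entries. -/
abbrev Filling : Type := ℕ → ℕ → Finset ℕ

/-- `lam` is a partition shape with at most `n` rows. -/
def IsPartitionShape (n : ℕ) (lam : ℕ → ℕ) : Prop :=
  (∀ r, lam (r + 1) ≤ lam r) ∧ (∀ r, n ≤ r → lam r = 0)

/-- Semistandard set-valued tableau of shape `lam` with entries in `{1,…,n}`. -/
structure IsSVT (n : ℕ) (lam : ℕ → ℕ) (t : Filling) : Prop where
  boxNonempty : ∀ r c, c < lam r → (t r c).Nonempty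
  emptyOutside : ∀ r c, ¬ c < lam r → t r c = ∅
  entryBounds : ∀ r c a, a ∈ t r c → 1 ≤ a ∧ a ≤ n
  rowWeak : ∀ r c a b, a ∈ t r c → b ∈ t r (c + 1) → a ≤ b
  colStrict : ∀ r c a b, a ∈ t r c → b ∈ t (r + 1) c → a < b

/-- Semistandard Young tableau: a set-valued tableau all of whose boxes are singletons. -/
def IsSSYT (n : ℕ) (lam : ℕ → ℕ) (t : Filling) : Prop :=
  IsSVT n lam t ∧ ∀ r c, c < lam r → (t r c).card = 1

/-- The weight: `wt n lam t j` is the number of boxes of `t` containing the entry `j`. -/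
def wt (n : ℕ) (lam : ℕ → ℕ) (t : Filling) (j : ℕ) : ℕ :=
  ((Finset.range n ×ˢ Finset.range (lam 0)).filter (fun p => j ∈ t p.1 p.2)).card

/-- The excess: total number of extra entries. -/
def excess (n : ℕ) (lam : ℕ → ℕ) (t : Filling) : ℕ :=
  ∑ p ∈ Finset.range n ×ˢ Finset.range (lam 0), ((t p.1 p.2).card - 1)

/-- Column `c` contains the entry `a`. -/
def colHas (n : ℕ) (t : Filling) (a c : ℕ) : Prop := ∃ r, r < n ∧ a ∈ t r c

/-- The sign of column `c` for the `i`-signature rule: `+` (true) if the column contains `i`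
but not `i+1`, `-` (false) if it contains `i+1` but not `i`. -/
def colSign (n : ℕ) (t : Filling) (i c : ℕ) : Option Bool :=
  if colHas n t i c ∧ ¬ colHas n t (i + 1) c then some true
  else if colHas n t (i + 1) c ∧ ¬ colHas n t i c then some false
  else none

/-- The number of `-` (false) signs left uncanceled after scanning the word left-to-right,
iteratively canceling `-+` pairs. -/
def mctr (w : List Bool) : ℕ := w.foldl (fun cnt b => if b then cnt - 1 else cnt + 1) 0

/-- The number of `+` (true) signs left uncanceled, scanning right-to-left. -/
def pctr (w : List Bool) : ℕ := w.foldr (fun b cnt => if b then cnt + 1 else cnt - 1) 0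

/-- The word of column signs of the columns before column `c`. -/
def colWordBefore (n : ℕ) (t : Filling) (i c : ℕ) : List Bool :=
  (List.range c).filterMap (colSign n t i)

/-- The word of column signs of the columns after column `c` (among columns `< ncols`). -/
def colWordAfter (n ncols : ℕ) (t : Filling) (i c : ℕ) : List Bool :=
  ((List.range ncols).drop (c + 1)).filterMap (colSign n t i)

/-- Column `c` carries an uncanceled `+` for the `i`-signature rule. -/
def PlusCol (n ncols : ℕ) (t : Filling) (i c : ℕ) : Prop :=
  c < ncols ∧ colSign n t i c = some true ∧ mctr (colWordBefore n t i c) = 0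

/-- Column `c` carries an uncanceled `-` for the `i`-signature rule. -/
def MinusCol (n ncols : ℕ) (t : Filling) (i c : ℕ) : Prop :=
  c < ncols ∧ colSign n t i c = some false ∧ pctr (colWordAfter n ncols t i c) = 0

/-- Column `c` is the rightmost uncanceled `+`. -/
def fBoxCol (n ncols : ℕ) (t : Filling) (i c : ℕ) : Prop :=
  PlusCol n ncols t i c ∧ ∀ c', PlusCol n ncols t i c' → c' ≤ c

/-- Column `c` is the leftmost uncanceled `-`. -/
def eBoxCol (n ncols : ℕ) (t : Filling) (i c : ℕ) : Prop :=
  MinusCol n ncols t i c ∧ ∀ c', MinusCol n ncols t i c' → c ≤ c'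

/-- Replace the content of the box in row `r`, column `c` by `A`. -/
def updateBox (t : Filling) (r c : ℕ) (A : Finset ℕ) : Filling :=
  fun r' c' => if r' = r ∧ c' = c then A else t r' c'

/-- The set-valued crystal operator `f_i` (signature rule). -/
def fRaw (n : ℕ) (lam : ℕ → ℕ) (i : ℕ) (t : Filling) : Option Filling :=
  if h : ∃ c, fBoxCol n (lam 0) t i c then
    let c := Classical.choose h
    if hr : ∃ r, r < n ∧ i ∈ t r c then
      let r := Classical.choose hr
      if i ∈ t r (c + 1) then
        some (updateBox (updateBox t r (c + 1) ((t r (c + 1)).erase i)) r c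
          (insert (i + 1) (t r c)))
      else some (updateBox t r c (insert (i + 1) ((t r c).erase i)))
    else none
  else none

/-- The set-valued crystal operator `e_i` (signature rule). -/
def eRaw (n : ℕ) (lam : ℕ → ℕ) (i : ℕ) (t : Filling) : Option Filling :=
  if h : ∃ c, eBoxCol n (lam 0) t i c then
    let c := Classical.choose h
    if hr : ∃ r, r < n ∧ (i + 1) ∈ t r c then
      let r := Classical.choose hr
      if 0 < c ∧ (i + 1) ∈ t r (c - 1) then
        some (updateBox (updateBox t r (c - 1) ((t r (c - 1)).erase (i + 1))) r c
          (insert i (t r c)))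
      else some (updateBox t r c (insert i ((t r c).erase (i + 1))))
    else none
  else none

/-- Iterate a partially-defined operator. -/
def iterOpt (g : Filling → Option Filling) : ℕ → Filling → Option Filling
  | 0, t => some t
  | m + 1, t => (iterOpt g m t).bind g

/-- Highest weight (Yamanouchi) elements. -/
def IsYamanouchi (n : ℕ) (lam : ℕ → ℕ) (t : Filling) : Prop :=
  ∀ i, 1 ≤ i → i < n → eRaw n lam i t = none

/-- Closure of `t0` under the crystal operators `e_i`, `f_i` for `1 ≤ i < n`. -/
inductive Reach (n : ℕ) (lam : ℕ → ℕ) (t0 : Filling) : Filling → Prop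
  | base : Reach n lam t0 t0
  | stepF : ∀ {t t' : Filling} (i : ℕ), 1 ≤ i → i < n → Reach n lam t0 t →
      fRaw n lam i t = some t' → Reach n lam t0 t'
  | stepE : ∀ {t t' : Filling} (i : ℕ), 1 ≤ i → i < n → Reach n lam t0 t →
      eRaw n lam i t = some t' → Reach n lam t0 t'

/-- The one-row partition `(s)`. -/
def rowShape (s : ℕ) : ℕ → ℕ := fun r => if r = 0 then s else 0

/-- The one-column partition `(1^k)`. -/
def colShape (k : ℕ) : ℕ → ℕ := fun r => if r < k then 1 else 0

/-- The hook partition `(s, 1^e)`. -/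
def hookShape (s e : ℕ) : ℕ → ℕ := fun r => if r = 0 then s else if r ≤ e then 1 else 0

/-! ### K-theory crystal operators (for single rows and single columns) -/

/-- Some box of the tableau contains the entry `a`. -/
def containsEntry (n : ℕ) (lam : ℕ → ℕ) (t : Filling) (a : ℕ) : Prop :=
  ∃ r c, r < n ∧ c < lam r ∧ a ∈ t r c

/-- `p` is the rightmost box of `t` containing `i`. -/
def KBoxF (n : ℕ) (lam : ℕ → ℕ) (t : Filling) (i : ℕ) (p : ℕ × ℕ) : Prop :=
  p.1 < n ∧ p.2 < lam p.1 ∧ i ∈ t p.1 p.2 ∧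
    ∀ q : ℕ × ℕ, q.1 < n → q.2 < lam q.1 → i ∈ t q.1 q.2 → q.2 ≤ p.2

/-- The K-crystal operator `f_i^K`: if `i` occurs in `t` and `i+1` does not, add `i+1` to
the rightmost box containing `i`; otherwise `0`. -/
def fK (n : ℕ) (lam : ℕ → ℕ) (i : ℕ) (t : Filling) : Option Filling :=
  if h : (∃ p : ℕ × ℕ, KBoxF n lam t i p) ∧ ¬ containsEntry n lam t (i + 1) then
    let p := Classical.choose h.1
    some (updateBox t p.1 p.2 (insert (i + 1) (t p.1 p.2)))
  else none

/-- The K-crystal operator `e_i^K`: delete `i+1` from the box containing both `i` and `i+1`,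
if such a box exists; otherwise `0`. -/
def eK (n : ℕ) (lam : ℕ → ℕ) (i : ℕ) (t : Filling) : Option Filling :=
  if h : ∃ p : ℕ × ℕ, p.1 < n ∧ p.2 < lam p.1 ∧ i ∈ t p.1 p.2 ∧ (i + 1) ∈ t p.1 p.2 then
    let p := Classical.choose h
    some (updateBox t p.1 p.2 ((t p.1 p.2).erase (i + 1)))
  else none

/-- `t'` is the result of applying `g` to `t` as many times as possible. -/
def MaxApply (g : Filling → Option Filling) (t t' : Filling) : Prop :=
  (∃ m, iterOpt g m t = some t') ∧ g t' = none

/-- One Demazure step: apply `e_i` as many times as possible, then `e_i^K` as many times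
as possible (here `eKop i` is the `i`-th K-operator). -/
def DemStep (n : ℕ) (lam : ℕ → ℕ) (eKop : ℕ → Filling → Option Filling) (i : ℕ)
    (t t' : Filling) : Prop :=
  ∃ t1, MaxApply (eRaw n lam i) t t1 ∧ MaxApply (eKop i) t1 t'

/-- `DemReach n lam eKop [i₁,…,iℓ] t u` holds when
`u = (e_{iℓ}^K)^max e_{iℓ}^max ⋯ (e_{i₁}^K)^max e_{i₁}^max t`. -/
def DemReach (n : ℕ) (lam : ℕ → ℕ) (eKop : ℕ → Filling → Option Filling) :
    List ℕ → Filling → Filling → Prop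
  | [], t, u => t = u
  | i :: rest, t, u => ∃ t2, DemStep n lam eKop i t t2 ∧ DemReach n lam eKop rest t2 u

/-- The minimal highest weight tableau `u_λ`, whose row `r` boxes are all `{r+1}`. -/
def uTab (lam : ℕ → ℕ) : Filling := fun r c => if c < lam r then {r + 1} else ∅

/-- The K-Demazure crystal associated with a word `[i₁,…,iℓ]`. -/
def KDem (n : ℕ) (lam : ℕ → ℕ) (eKop : ℕ → Filling → Option Filling) (word : List ℕ) :
    Set Filling :=
  {t | IsSVT n lam t ∧ DemReach n lam eKop word t (uTab lam)}

/-! ### Permutations and reduced words -/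

/-- The permutation `s_{i₁} ⋯ s_{iℓ}` of a word `[i₁,…,iℓ]`, where `s_i` swaps `i`, `i+1`. -/
def wordPerm (word : List ℕ) : Equiv.Perm ℕ :=
  (word.map fun i => Equiv.swap i (i + 1)).prod

/-- `word` is a reduced word for `w` in the Coxeter generators `s_1, …, s_{n-1}`. -/
def IsReducedWord (n : ℕ) (w : Equiv.Perm ℕ) (word : List ℕ) : Prop :=
  (∀ i ∈ word, 1 ≤ i ∧ i < n) ∧ wordPerm word = w ∧
    ∀ word' : List ℕ, (∀ i ∈ word', 1 ≤ i ∧ i < n) → wordPerm word' = w →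
      word.length ≤ word'.length

/-- The Coxeter length of a permutation of `{1,…,n}`. -/
def permLength (n : ℕ) (σ : Equiv.Perm ℕ) : ℕ :=
  sInf {l | ∃ word : List ℕ, (∀ i ∈ word, 1 ≤ i ∧ i < n) ∧ wordPerm word = σ ∧
    word.length = l}

/-- The parabolic subgroup generated by `s_2, …, s_{n-1}`. -/
def parabolic (n : ℕ) : Subgroup (Equiv.Perm ℕ) :=
  Subgroup.closure {σ | ∃ i, 2 ≤ i ∧ i < n ∧ σ = Equiv.swap i (i + 1)}

/-! ### Polynomials -/

/-- Polynomials in `x₁, x₂, …` over `ℤ[β]`; the variable `β` is `Polynomial.X`. -/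
abbrev KPoly : Type := MvPolynomial ℕ (Polynomial ℤ)

/-- The scalar `β`. -/
def betaP : KPoly := MvPolynomial.C Polynomial.X

/-- The monomial `x^{wt(T)} = x₁^{wt₁} ⋯ xₙ^{wtₙ}`. -/
def xwt (n : ℕ) (lam : ℕ → ℕ) (t : Filling) : KPoly :=
  ∏ j ∈ Finset.Icc 1 n, (MvPolynomial.X j : KPoly) ^ wt n lam t j

/-- The β-character `∑_{T ∈ S} β^{excess T} x^{wt T}` of a set of tableaux. -/
def charSet (n : ℕ) (lam : ℕ → ℕ) (S : Set Filling) : KPoly :=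
  ∑ᶠ t ∈ S, betaP ^ excess n lam t * xwt n lam t

/-- The symmetric Grothendieck polynomial `𝔊_λ(x₁,…,xₙ; β)`. -/
def Groth (n : ℕ) (lam : ℕ → ℕ) : KPoly :=
  charSet n lam {t | IsSVT n lam t}

/-- The Schur polynomial `s_μ(x₁,…,xₙ)`. -/
def SchurP (n : ℕ) (mu : ℕ → ℕ) : KPoly :=
  ∑ᶠ t ∈ {t : Filling | IsSSYT n mu t}, xwt n mu t

/-- The numerator defining the Demazure–Lascoux operator `ϖ_i`. -/
def DLnum (i : ℕ) (f : KPoly) : KPoly :=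
  (MvPolynomial.X i + betaP * MvPolynomial.X i * MvPolynomial.X (i + 1)) * f -
    (MvPolynomial.X (i + 1) + betaP * MvPolynomial.X i * MvPolynomial.X (i + 1)) *
      (MvPolynomial.rename (Equiv.swap i (i + 1)) f)

/-- `DL` implements the Demazure–Lascoux operators `ϖ_i` for `1 ≤ i < n`:
`(x_i - x_{i+1}) · ϖ_i f` equals the defining numerator. -/
def IsDLOp (n : ℕ) (DL : ℕ → KPoly → KPoly) : Prop :=
  ∀ i, 1 ≤ i → i < n → ∀ f : KPoly,
    (MvPolynomial.X i - MvPolynomial.X (i + 1)) * DL i f = DLnum i f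

/-- `applyDL DL [i₁,…,iℓ] f = ϖ_{i₁} ϖ_{i₂} ⋯ ϖ_{iℓ} f`. -/
def applyDL (DL : ℕ → KPoly → KPoly) : List ℕ → KPoly → KPoly
  | [], f => f
  | i :: rest, f => DL i (applyDL DL rest f)

/-! ### Auxiliary word-combinatorics lemmas -/

def mctrA (k : ℕ) (w : List Bool) : ℕ := w.foldl (fun cnt b => if b then cnt - 1 else cnt + 1) k
def pctrA (k : ℕ) (w : List Bool) : ℕ := w.foldr (fun b cnt => if b then cnt + 1 else cnt - 1) k

lemma mctr_eq (w : List Bool) : mctr w = mctrA 0 w := rfl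
lemma pctr_eq (w : List Bool) : pctr w = pctrA 0 w := rfl

lemma mctrA_nil (k : ℕ) : mctrA k [] = k := rfl
lemma pctrA_nil (k : ℕ) : pctrA k [] = k := rfl

lemma mctrA_cons_true (k : ℕ) (w : List Bool) : mctrA k (true :: w) = mctrA (k - 1) w := rfl
lemma mctrA_cons_false (k : ℕ) (w : List Bool) : mctrA k (false :: w) = mctrA (k + 1) w := rfl
lemma pctrA_cons_true (k : ℕ) (w : List Bool) : pctrA k (true :: w) = pctrA k w + 1 := rfl
lemma pctrA_cons_false (k : ℕ) (w : List Bool) : pctrA k (false :: w) = pctrA k w - 1 := rfl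

lemma mctrA_append (k : ℕ) (u v : List Bool) :
    mctrA k (u ++ v) = mctrA (mctrA k u) v := List.foldl_append ..

lemma pctrA_append (k : ℕ) (u v : List Bool) :
    pctrA k (u ++ v) = pctrA (pctrA k v) u := List.foldr_append ..

lemma mctr_append (u v : List Bool) : mctr (u ++ v) = mctrA (mctr u) v := by
  rw [mctr_eq, mctrA_append, ← mctr_eq]

lemma pctr_append (u v : List Bool) : pctr (u ++ v) = pctrA (pctr v) u := by
  rw [pctr_eq, pctrA_append, ← pctr_eq]

lemma pctr_cons_true (w : List Bool) : pctr (true :: w) = pctr w + 1 := rfl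
lemma pctr_cons_false (w : List Bool) : pctr (false :: w) = pctr w - 1 := rfl
lemma mctr_cons_true (w : List Bool) : mctr (true :: w) = mctr w := rfl
lemma mctr_cons_false (w : List Bool) : mctr (false :: w) = mctrA 1 w := rfl

lemma mctrA_bound (w : List Bool) : ∀ k, k + w.count false ≤ mctrA k w + w.count true := by
  induction w with
  | nil => intro k; simp [mctrA_nil]
  | cons b w ih =>
    intro k
    cases b
    · have := ih (k + 1)
      rw [mctrA_cons_false]; simp only [List.count_cons]; simp; omega
    · have := ih (k - 1)
      rw [mctrA_cons_true]; simp only [List.count_cons]; simp; omega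

lemma pctrA_bound (w : List Bool) : ∀ k, k + w.count true ≤ pctrA k w + w.count false := by
  induction w with
  | nil => intro k; simp [pctrA_nil]
  | cons b w ih =>
    intro k
    have := ih k
    cases b
    · rw [pctrA_cons_false]; simp only [List.count_cons]; simp; omega
    · rw [pctrA_cons_true]; simp only [List.count_cons]; simp; omega

lemma mctrA_formula (w : List Bool) :
    ∀ k, mctrA k w = max (mctr w) (k + w.count false - w.count true) := by
  induction w with
  | nil => intro k; simp [mctr, mctrA_nil]
  | cons b w ih =>
    intro k
    have hb := mctrA_bound w 0
    cases b
    · rw [mctrA_cons_false, mctr_cons_false]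
      have h1 := ih (k + 1); have h2 := ih 1; have h3 := ih 0
      rw [← mctr_eq] at h3
      simp only [List.count_cons]; simp; omega
    · rw [mctrA_cons_true, mctr_cons_true]
      have h1 := ih (k - 1); have h3 := ih 0
      rw [← mctr_eq] at h3
      simp only [List.count_cons]; simp; omega

lemma pctrA_formula (w : List Bool) :
    ∀ k, pctrA k w = max (pctr w) (k + w.count true - w.count false) := by
  induction w with
  | nil => intro k; simp [pctr, pctrA_nil]
  | cons b w ih =>
    intro k
    have hb := pctrA_bound w 0
    rw [← pctr_eq] at hb
    cases b
    · rw [pctrA_cons_false, pctr_cons_false]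
      have h1 := ih k; have h3 := ih 0
      rw [← pctr_eq] at h3
      simp only [List.count_cons]; simp; omega
    · rw [pctrA_cons_true, pctr_cons_true]
      have h1 := ih k; have h3 := ih 0
      rw [← pctr_eq] at h3
      simp only [List.count_cons]; simp; omega

/-- fundamental identity: `pctr + #false = mctr + #true`. -/
lemma pctr_mctr (w : List Bool) :
    pctr w + w.count false = mctr w + w.count true := by
  induction w with
  | nil => simp [pctr, mctr]
  | cons b w ih =>
    cases b
    · rw [pctr_cons_false, mctr_cons_false]
      have h2 := mctrA_formula w 1
      have hb := mctrA_bound w 0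
      rw [← mctr_eq] at hb
      simp only [List.count_cons]; simp; omega
    · rw [pctr_cons_true, mctr_cons_true]
      simp only [List.count_cons]; simp; omega

lemma mctr_ge (w : List Bool) : w.count false ≤ mctr w + w.count true := by
  have := mctrA_bound w 0; rw [← mctr_eq] at this; omega

lemma pctr_ge (w : List Bool) : w.count true ≤ pctr w + w.count false := by
  have := pctrA_bound w 0; rw [← pctr_eq] at this; omega

lemma pctr_append_true (u : List Bool) :
    pctr (u ++ [true]) = max (pctr u) (1 + u.count true - u.count false) := by
  rw [pctr_append, show pctr [true] = 1 from rfl, pctrA_formula]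

lemma pctr_append_false (u : List Bool) : pctr (u ++ [false]) = pctr u := by
  rw [pctr_append, show pctr [false] = 0 from rfl, pctrA_formula]
  have := pctr_ge u
  omega

lemma mctr_cons_false' (w : List Bool) :
    mctr (false :: w) = max (mctr w) (1 + w.count false - w.count true) := by
  rw [mctr_cons_false, mctrA_formula]

/-- existence of an uncanceled plus decomposition -/
lemma exists_plus (w : List Bool) (h : 0 < pctr w) :
    ∃ a b, w = a ++ true :: b ∧ mctr a = 0 ∧ pctr b = 0 := by
  induction w using List.reverseRecOn with
  | nil => simp [pctr] at h
  | append_singleton u x ih =>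
    cases x
    · rw [pctr_append_false] at h
      obtain ⟨a, b, hu, ha, hb⟩ := ih h
      refine ⟨a, b ++ [false], by simp [hu], ha, ?_⟩
      rw [pctr_append_false, hb]
    · by_cases hm : mctr u = 0
      · exact ⟨u, [], rfl, hm, rfl⟩
      · have hid := pctr_mctr u
        rw [pctr_append_true] at h
        have hpu : 0 < pctr u := by omega
        obtain ⟨a, b, hu, ha, hb⟩ := ih hpu
        refine ⟨a, b ++ [true], by simp [hu], ha, ?_⟩
        have hmb : mctr u = mctr b := by
          rw [hu, show a ++ true :: b = (a ++ [true]) ++ b by simp, mctr_append,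
            mctr_append, ha, show mctrA 0 [true] = 0 from rfl, ← mctr_eq]
        have hidb := pctr_mctr b
        rw [pctr_append_true, hb]
        omega

/-- existence of an uncanceled minus decomposition -/
lemma exists_minus (w : List Bool) (h : 0 < mctr w) :
    ∃ a b, w = a ++ false :: b ∧ mctr a = 0 ∧ pctr b = 0 := by
  induction w with
  | nil => simp [mctr] at h
  | cons x w ih =>
    cases x
    · by_cases hp : pctr w = 0
      · exact ⟨[], w, rfl, rfl, hp⟩
      · have hid := pctr_mctr w
        rw [mctr_cons_false'] at h
        have hmw : 0 < mctr w := by omega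
        obtain ⟨a, b, hu, ha, hb⟩ := ih hmw
        refine ⟨false :: a, b, by simp [hu], ?_, hb⟩
        have hpa : pctr w = pctr a := by
          rw [hu, pctr_append, pctr_cons_false, hb, show (0:ℕ) - 1 = 0 from rfl, ← pctr_eq]
        have hida := pctr_mctr a
        rw [mctr_cons_false', ha]
        omega
    · rw [mctr_cons_true] at h
      obtain ⟨a, b, hu, ha, hb⟩ := ih h
      exact ⟨true :: a, b, by simp [hu], by rw [mctr_cons_true, ha], hb⟩

lemma mctr_append_cons (w₁ w₂ : List Bool) (x : Bool) :
    mctr (w₁ ++ x :: w₂) = mctrA (mctrA (mctr w₁) [x]) w₂ := by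
  rw [show w₁ ++ x :: w₂ = (w₁ ++ [x]) ++ w₂ by simp, mctr_append, mctr_append]

lemma pctr_append_cons (w₁ w₂ : List Bool) (x : Bool) :
    pctr (w₁ ++ x :: w₂) = pctrA (pctrA (pctr w₂) [x]) w₁ := by
  rw [pctr_append]; rfl

lemma mctr_app_t (u v : List Bool) (h : mctr u = 0) : mctr (u ++ true :: v) = mctr v := by
  rw [mctr_append_cons, h, show mctrA 0 [true] = 0 from rfl, ← mctr_eq]

lemma mctr_app_f (u v : List Bool) (h : mctr u = 0) : mctr (u ++ false :: v) = mctrA 1 v := by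
  rw [mctr_append_cons, h, show mctrA 0 [false] = 1 from rfl]

lemma pctr_app_t (u v : List Bool) (h : pctr v = 0) : pctr (u ++ true :: v) = pctrA 1 u := by
  rw [pctr_append_cons, h, show pctrA 0 [true] = 1 from rfl]

lemma pctr_app_f (u v : List Bool) (h : pctr v = 0) : pctr (u ++ false :: v) = pctr u := by
  rw [pctr_append_cons, h, show pctrA 0 [false] = 0 from rfl, ← pctr_eq]

lemma no_plus_after (mid rest : List Bool) (hm : mctr mid = 0)
    (hp : pctr (mid ++ true :: rest) = 0) : False := by
  rw [pctr_append_cons, show pctrA (pctr rest) [true] = pctr rest + 1 from rfl,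
    pctrA_formula] at hp
  have i := pctr_mctr mid
  omega

lemma no_minus_before (w₁ mid : List Bool) (hpmid : pctr mid = 0)
    (h : mctr (w₁ ++ false :: mid) = 0) : False := by
  rw [mctr_append_cons, show mctrA (mctr w₁) [false] = mctr w₁ + 1 from rfl,
    mctrA_formula] at h
  have i := pctr_mctr mid
  omega

lemma flip_pctr_t (w₁ w₂ : List Bool) (h1 : mctr w₁ = 0) (h2 : pctr w₂ = 0) :
    pctr (w₁ ++ true :: w₂) = pctr w₁ + 1 := by
  rw [pctr_app_t _ _ h2, pctrA_formula]
  have i := pctr_mctr w₁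
  omega

lemma flip_pctr_f (w₁ w₂ : List Bool) (h2 : pctr w₂ = 0) :
    pctr (w₁ ++ false :: w₂) = pctr w₁ := pctr_app_f _ _ h2

lemma flip_mctr_t (w₁ w₂ : List Bool) (h1 : mctr w₁ = 0) :
    mctr (w₁ ++ true :: w₂) = mctr w₂ := mctr_app_t _ _ h1

lemma flip_mctr_f (w₁ w₂ : List Bool) (h1 : mctr w₁ = 0) (h2 : pctr w₂ = 0) :
    mctr (w₁ ++ false :: w₂) = mctr w₂ + 1 := by
  rw [mctr_app_f _ _ h1, mctrA_formula]
  have i := pctr_mctr w₂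
  omega

/-! ### Column sign words -/

def wseg (n : ℕ) (t : Filling) (i s m : ℕ) : List Bool :=
  (List.range' s m).filterMap (colSign n t i)

lemma wseg_zero (n : ℕ) (t : Filling) (i s : ℕ) : wseg n t i s 0 = [] := rfl

lemma wseg_succ (n : ℕ) (t : Filling) (i s m : ℕ) :
    wseg n t i s (m + 1) = (colSign n t i s).toList ++ wseg n t i (s + 1) m := by
  unfold wseg
  rw [List.range'_succ, List.filterMap_cons]
  cases colSign n t i s <;> rfl

lemma wseg_append (n : ℕ) (t : Filling) (i s m₁ m₂ : ℕ) :
    wseg n t i s (m₁ + m₂) = wseg n t i s m₁ ++ wseg n t i (s + m₁) m₂ := by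
  unfold wseg
  rw [← List.filterMap_append]
  congr 1
  have h : List.range' s m₁ 1 ++ List.range' (s + 1 * m₁) m₂ 1 = List.range' s (m₂ + m₁) 1 := by
    rw [Nat.add_comm m₂ m₁]; exact List.range'_append
  simp only [one_mul] at h
  rw [Nat.add_comm m₁ m₂, ← h]

lemma wseg_one (n : ℕ) (t : Filling) (i c : ℕ) :
    wseg n t i c 1 = (colSign n t i c).toList := by
  rw [wseg_succ, wseg_zero, List.append_nil]

lemma wseg_split (n : ℕ) (t : Filling) (i s m c : ℕ) (h1 : s ≤ c) (h2 : c < s + m) :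
    wseg n t i s m =
      wseg n t i s (c - s) ++ (colSign n t i c).toList ++ wseg n t i (c + 1) (s + m - (c + 1)) := by
  have hm : m = (c - s) + (1 + (s + m - (c + 1))) := by omega
  conv_lhs => rw [hm, wseg_append n t i s (c - s) (1 + (s + m - (c + 1))),
    show s + (c - s) = c by omega,
    wseg_append n t i c 1 (s + m - (c + 1)), wseg_one]
  rw [List.append_assoc]

lemma wseg_decomp (n : ℕ) (t : Filling) (i : ℕ) (x : Bool) :
    ∀ (m s : ℕ) (a b : List Bool), wseg n t i s m = a ++ x :: b →
    ∃ c, s ≤ c ∧ c < s + m ∧ colSign n t i c = some x ∧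
      wseg n t i s (c - s) = a ∧ wseg n t i (c + 1) (s + m - (c + 1)) = b := by
  intro m
  induction m with
  | zero =>
    intro s a b h
    rw [wseg_zero] at h
    exact absurd h (by cases a <;> simp)
  | succ m ih =>
    intro s a b h
    rw [wseg_succ] at h
    cases hs : colSign n t i s with
    | none =>
      rw [hs] at h
      simp only [Option.toList, List.nil_append] at h
      obtain ⟨c, h1, h2, h3, h4, h5⟩ := ih (s + 1) a b h
      refine ⟨c, by omega, by omega, h3, ?_, ?_⟩
      · rw [show c - s = (c - (s + 1)) + 1 by omega]
        rw [Nat.add_comm (c - (s + 1)) 1, wseg_append, wseg_one, hs,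
          show s + 1 = s + 1 from rfl]
        simpa using h4
      · rw [show s + (m + 1) - (c + 1) = (s + 1) + m - (c + 1) by omega]
        exact h5
    | some y =>
      rw [hs] at h
      simp only [Option.toList, List.singleton_append] at h
      cases a with
      | nil =>
        simp only [List.nil_append, List.cons.injEq] at h
        refine ⟨s, le_rfl, by omega, by rw [hs, h.1], by rw [Nat.sub_self, wseg_zero], ?_⟩
        rw [show s + (m + 1) - (s + 1) = m by omega]
        exact h.2
      | cons z a' =>
        simp only [List.cons_append, List.cons.injEq] at h
        obtain ⟨h0, h⟩ := h
        obtain ⟨c, h1, h2, h3, h4, h5⟩ := ih (s + 1) a' b h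
        refine ⟨c, by omega, by omega, h3, ?_, ?_⟩
        · rw [show c - s = 1 + (c - (s + 1)) by omega, wseg_append, wseg_one, hs,
            show s + 1 = s + 1 from rfl, h4, h0]
          rfl
        · rw [show s + (m + 1) - (c + 1) = (s + 1) + m - (c + 1) by omega]
          exact h5

lemma colWordBefore_eq (n : ℕ) (t : Filling) (i c : ℕ) :
    colWordBefore n t i c = wseg n t i 0 c := by
  unfold colWordBefore wseg
  rw [List.range_eq_range']

lemma range_drop (N m : ℕ) : (List.range N).drop m = List.range' m (N - m) := by
  rcases le_or_gt m N with h | h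
  · have h2 : List.range' 0 m 1 ++ List.range' (0 + 1 * m) (N - m) 1 = List.range' 0 (N - m + m) 1 := by
      rw [Nat.add_comm (N - m) m]; exact List.range'_append
    simp only [one_mul, Nat.zero_add] at h2
    have h3 : List.range N = List.range' 0 m ++ List.range' m (N - m) := by
      rw [List.range_eq_range', h2, show N - m + m = N by omega]
    rw [h3, List.drop_left' (by simp)]
  · rw [List.drop_eq_nil_of_le (by simp; omega), show N - m = 0 by omega]
    rfl

lemma colWordAfter_eq (n N : ℕ) (t : Filling) (i c : ℕ) :
    colWordAfter n N t i c = wseg n t i (c + 1) (N - (c + 1)) := by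
  unfold colWordAfter wseg
  rw [range_drop]

/-! ### Characterization of f/e box columns -/

lemma plusCol_iff (n N : ℕ) (t : Filling) (i c : ℕ) : PlusCol n N t i c ↔
    c < N ∧ colSign n t i c = some true ∧ mctr (wseg n t i 0 c) = 0 := by
  unfold PlusCol
  rw [colWordBefore_eq]

lemma minusCol_iff (n N : ℕ) (t : Filling) (i c : ℕ) : MinusCol n N t i c ↔
    c < N ∧ colSign n t i c = some false ∧ pctr (wseg n t i (c + 1) (N - (c + 1))) = 0 := by
  unfold MinusCol
  rw [colWordAfter_eq]

lemma fBoxCol_iff (n N : ℕ) (t : Filling) (i c : ℕ) : fBoxCol n N t i c ↔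
    c < N ∧ colSign n t i c = some true ∧ mctr (wseg n t i 0 c) = 0 ∧
      pctr (wseg n t i (c + 1) (N - (c + 1))) = 0 := by
  constructor
  · rintro ⟨hp, hmax⟩
    rw [plusCol_iff] at hp
    obtain ⟨hcN, hsc, hm⟩ := hp
    refine ⟨hcN, hsc, hm, ?_⟩
    by_contra hne
    obtain ⟨a, b, hab, ha, hb⟩ := exists_plus _ (Nat.pos_of_ne_zero hne)
    obtain ⟨c', h1, h2, h3, h4, h5⟩ := wseg_decomp n t i true _ _ _ _ hab
    have hp' : PlusCol n N t i c' := by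
      rw [plusCol_iff]
      refine ⟨by omega, h3, ?_⟩
      have hsplit := wseg_split n t i 0 c' c (by omega) (by omega)
      rw [Nat.sub_zero, Nat.zero_add] at hsplit
      rw [hsplit, hsc]
      simp only [Option.toList_some, List.singleton_append, List.append_assoc, List.cons_append,
        List.nil_append]
      rw [mctr_app_t _ _ hm, h4, ha]
    have := hmax c' hp'
    omega
  · rintro ⟨hcN, hsc, hm, hp⟩
    refine ⟨(plusCol_iff n N t i c).mpr ⟨hcN, hsc, hm⟩, ?_⟩
    intro c' hp'
    rw [plusCol_iff] at hp'
    obtain ⟨hc'N, hsc', hm'⟩ := hp'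
    by_contra hlt
    push_neg at hlt
    have hsplit := wseg_split n t i 0 c' c (by omega) (by omega)
    rw [Nat.sub_zero, Nat.zero_add] at hsplit
    rw [hsplit, hsc] at hm'
    have hmid : mctr (wseg n t i (c + 1) (c' - (c + 1))) = 0 := by
      rw [show wseg n t i 0 c ++ Option.toList (some true) ++ wseg n t i (c+1) (c' - (c+1)) =
        wseg n t i 0 c ++ true :: wseg n t i (c+1) (c' - (c+1)) by simp] at hm'
      rwa [mctr_app_t _ _ hm] at hm'
    have hsplit2 := wseg_split n t i (c + 1) (N - (c + 1)) c' (by omega) (by omega)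
    rw [show c + 1 + (N - (c + 1)) - (c' + 1) = N - (c' + 1) by omega] at hsplit2
    rw [hsplit2, hsc'] at hp
    rw [show wseg n t i (c+1) (c' - (c+1)) ++ Option.toList (some true) ++
        wseg n t i (c' + 1) (N - (c' + 1)) =
      wseg n t i (c+1) (c' - (c+1)) ++ true :: wseg n t i (c' + 1) (N - (c' + 1)) by simp] at hp
    exact no_plus_after _ _ hmid hp

lemma eBoxCol_iff (n N : ℕ) (t : Filling) (i c : ℕ) : eBoxCol n N t i c ↔
    c < N ∧ colSign n t i c = some false ∧ mctr (wseg n t i 0 c) = 0 ∧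
      pctr (wseg n t i (c + 1) (N - (c + 1))) = 0 := by
  constructor
  · rintro ⟨hp, hmin⟩
    rw [minusCol_iff] at hp
    obtain ⟨hcN, hsc, hpa⟩ := hp
    refine ⟨hcN, hsc, ?_, hpa⟩
    by_contra hne
    obtain ⟨a, b, hab, ha, hb⟩ := exists_minus _ (Nat.pos_of_ne_zero hne)
    obtain ⟨c'', h1, h2, h3, h4, h5⟩ := wseg_decomp n t i false _ _ _ _ hab
    rw [Nat.zero_add] at h2
    rw [Nat.sub_zero] at h4
    rw [Nat.zero_add] at h5
    have hm' : MinusCol n N t i c'' := by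
      rw [minusCol_iff]
      refine ⟨by omega, h3, ?_⟩
      have hsplit := wseg_split n t i (c'' + 1) (N - (c'' + 1)) c (by omega) (by omega)
      rw [show c'' + 1 + (N - (c'' + 1)) - (c + 1) = N - (c + 1) by omega] at hsplit
      rw [hsplit, hsc, h5]
      simp only [Option.toList_some, List.singleton_append, List.append_assoc, List.cons_append,
        List.nil_append]
      rw [pctr_app_f _ _ hpa, hb]
    have := hmin c'' hm'
    omega
  · rintro ⟨hcN, hsc, hm, hp⟩
    refine ⟨(minusCol_iff n N t i c).mpr ⟨hcN, hsc, hp⟩, ?_⟩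
    intro c' hp'
    rw [minusCol_iff] at hp'
    obtain ⟨hc'N, hsc', hpa'⟩ := hp'
    by_contra hlt
    push_neg at hlt
    have hsplit := wseg_split n t i 0 c c' (by omega) (by omega)
    rw [Nat.sub_zero, Nat.zero_add] at hsplit
    rw [hsplit, hsc'] at hm
    have hsplit2 := wseg_split n t i (c' + 1) (N - (c' + 1)) c (by omega) (by omega)
    rw [show c' + 1 + (N - (c' + 1)) - (c + 1) = N - (c + 1) by omega] at hsplit2
    rw [hsplit2, hsc] at hpa'
    rw [show wseg n t i (c'+1) (c - (c'+1)) ++ Option.toList (some false) ++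
        wseg n t i (c + 1) (N - (c + 1)) =
      wseg n t i (c'+1) (c - (c'+1)) ++ false :: wseg n t i (c + 1) (N - (c + 1)) by simp] at hpa'
    rw [pctr_app_f _ _ hp] at hpa'
    rw [show wseg n t i 0 c' ++ Option.toList (some false) ++ wseg n t i (c'+1) (c - (c'+1)) =
      wseg n t i 0 c' ++ false :: wseg n t i (c'+1) (c - (c'+1)) by simp] at hm
    exact no_minus_before _ _ hpa' hm

lemma fBoxCol_unique {n N : ℕ} {t : Filling} {i c c' : ℕ}
    (h : fBoxCol n N t i c) (h' : fBoxCol n N t i c') : c = c' :=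
  le_antisymm (h'.2 _ h.1) (h.2 _ h'.1)

lemma eBoxCol_unique {n N : ℕ} {t : Filling} {i c c' : ℕ}
    (h : eBoxCol n N t i c) (h' : eBoxCol n N t i c') : c = c' :=
  le_antisymm (h.2 _ h'.1) (h'.2 _ h.1)

lemma fBox_exists (n N : ℕ) (t : Filling) (i : ℕ) (h : 0 < pctr (wseg n t i 0 N)) :
    ∃ c, fBoxCol n N t i c := by
  obtain ⟨a, b, hab, ha, hb⟩ := exists_plus _ h
  obtain ⟨c, h1, h2, h3, h4, h5⟩ := wseg_decomp n t i true _ _ _ _ hab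
  rw [Nat.zero_add] at h2 h5
  rw [Nat.sub_zero] at h4
  exact ⟨c, (fBoxCol_iff n N t i c).mpr ⟨h2, h3, by rw [h4]; exact ha, by rw [h5]; exact hb⟩⟩

lemma eBox_exists (n N : ℕ) (t : Filling) (i : ℕ) (h : 0 < mctr (wseg n t i 0 N)) :
    ∃ c, eBoxCol n N t i c := by
  obtain ⟨a, b, hab, ha, hb⟩ := exists_minus _ h
  obtain ⟨c, h1, h2, h3, h4, h5⟩ := wseg_decomp n t i false _ _ _ _ hab
  rw [Nat.zero_add] at h2 h5
  rw [Nat.sub_zero] at h4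
  exact ⟨c, (eBoxCol_iff n N t i c).mpr ⟨h2, h3, by rw [h4]; exact ha, by rw [h5]; exact hb⟩⟩

lemma fullword_split_f {n N : ℕ} {t : Filling} {i c : ℕ} (h : fBoxCol n N t i c) :
    wseg n t i 0 N = wseg n t i 0 c ++ true :: wseg n t i (c + 1) (N - (c + 1)) := by
  rw [fBoxCol_iff] at h
  have hsplit := wseg_split n t i 0 N c (by omega) (by omega)
  rw [Nat.sub_zero, Nat.zero_add, h.2.1] at hsplit
  rw [hsplit]
  simp

lemma fullword_split_e {n N : ℕ} {t : Filling} {i c : ℕ} (h : eBoxCol n N t i c) :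
    wseg n t i 0 N = wseg n t i 0 c ++ false :: wseg n t i (c + 1) (N - (c + 1)) := by
  rw [eBoxCol_iff] at h
  have hsplit := wseg_split n t i 0 N c (by omega) (by omega)
  rw [Nat.sub_zero, Nat.zero_add, h.2.1] at hsplit
  rw [hsplit]
  simp

lemma pctr_pos_of_fBox {n N : ℕ} {t : Filling} {i c : ℕ} (h : fBoxCol n N t i c) :
    0 < pctr (wseg n t i 0 N) := by
  have hs := fullword_split_f h
  rw [fBoxCol_iff] at h
  rw [hs, flip_pctr_t _ _ h.2.2.1 h.2.2.2]
  omega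

lemma mctr_pos_of_eBox {n N : ℕ} {t : Filling} {i c : ℕ} (h : eBoxCol n N t i c) :
    0 < mctr (wseg n t i 0 N) := by
  have hs := fullword_split_e h
  rw [eBoxCol_iff] at h
  rw [hs, flip_mctr_f _ _ h.2.2.1 h.2.2.2]
  omega

/-! ### Structural lemmas for SVTs -/

lemma lam_anti {n : ℕ} {lam : ℕ → ℕ} (hsh : IsPartitionShape n lam) :
    ∀ {r r' : ℕ}, r ≤ r' → lam r' ≤ lam r := by
  intro r r' h
  induction r', h using Nat.le_induction with
  | base => exact le_rfl
  | succ r' h ih => exact le_trans (hsh.1 r') ih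

lemma mem_shape {n : ℕ} {lam : ℕ → ℕ} {t : Filling} (hT : IsSVT n lam t)
    {r c a : ℕ} (h : a ∈ t r c) : c < lam r := by
  by_contra hc
  rw [hT.emptyOutside r c hc] at h
  exact absurd h (Finset.notMem_empty a)

lemma mem_rowlt {n : ℕ} {lam : ℕ → ℕ} {t : Filling} (hsh : IsPartitionShape n lam)
    (hT : IsSVT n lam t) {r c a : ℕ} (h : a ∈ t r c) : r < n := by
  by_contra hr
  have h1 := hsh.2 r (le_of_not_gt hr)
  have h2 := mem_shape hT h
  omega

lemma col_lt_aux {n : ℕ} {lam : ℕ → ℕ} {t : Filling} (hsh : IsPartitionShape n lam)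
    (hT : IsSVT n lam t) {r r' c a : ℕ}
    (hrr : r < r') (ha : a ∈ t r c) : ∀ b ∈ t r' c, a < b := by
  induction r', hrr using Nat.le_induction with
  | base => exact fun b' hb' => hT.colStrict r c a b' ha hb'
  | succ r'' h ih =>
    intro b' hb'
    have hc : c < lam r'' := lt_of_lt_of_le (mem_shape hT hb') (hsh.1 r'')
    obtain ⟨x, hx⟩ := hT.boxNonempty r'' c hc
    exact lt_trans (ih x hx) (hT.colStrict r'' c x b' hx hb')

lemma col_lt {n : ℕ} {lam : ℕ → ℕ} {t : Filling} (hsh : IsPartitionShape n lam)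
    (hT : IsSVT n lam t) {r r' c a b : ℕ}
    (hrr : r < r') (ha : a ∈ t r c) (hb : b ∈ t r' c) : a < b :=
  col_lt_aux hsh hT hrr ha b hb

lemma row_le_aux {n : ℕ} {lam : ℕ → ℕ} {t : Filling} (hT : IsSVT n lam t) {r c c' a : ℕ}
    (hcc : c < c') (ha : a ∈ t r c) : ∀ b ∈ t r c', a ≤ b := by
  induction c', hcc using Nat.le_induction with
  | base => exact fun b' hb' => hT.rowWeak r c a b' ha hb'
  | succ c'' h ih =>
    intro b' hb'
    have hc : c'' < lam r := by have := mem_shape hT hb'; omega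
    obtain ⟨x, hx⟩ := hT.boxNonempty r c'' hc
    exact le_trans (ih x hx) (hT.rowWeak r c'' x b' hx hb')

lemma row_le {n : ℕ} {lam : ℕ → ℕ} {t : Filling} (hT : IsSVT n lam t) {r c c' a b : ℕ}
    (hcc : c < c') (ha : a ∈ t r c) (hb : b ∈ t r c') : a ≤ b :=
  row_le_aux hT hcc ha b hb

lemma row_unique {n : ℕ} {lam : ℕ → ℕ} {t : Filling} (hsh : IsPartitionShape n lam)
    (hT : IsSVT n lam t) {r r' c a : ℕ} (h : a ∈ t r c) (h' : a ∈ t r' c) : r = r' := by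
  rcases lt_trichotomy r r' with hlt | he | hgt
  · exact absurd (col_lt hsh hT hlt h h') (lt_irrefl a)
  · exact he
  · exact absurd (col_lt hsh hT hgt h' h) (lt_irrefl a)

/-! ### colSign characterizations -/

lemma colSign_eq_true {n : ℕ} {t : Filling} {i c : ℕ}
    (h1 : colHas n t i c) (h2 : ¬ colHas n t (i + 1) c) : colSign n t i c = some true := by
  unfold colSign
  rw [if_pos ⟨h1, h2⟩]

lemma colSign_eq_false {n : ℕ} {t : Filling} {i c : ℕ}
    (h1 : colHas n t (i + 1) c) (h2 : ¬ colHas n t i c) : colSign n t i c = some false := by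
  unfold colSign
  rw [if_neg (fun hh => h2 hh.1), if_pos ⟨h1, h2⟩]

lemma colSign_eq_none_both {n : ℕ} {t : Filling} {i c : ℕ}
    (h1 : colHas n t i c) (h2 : colHas n t (i + 1) c) : colSign n t i c = none := by
  unfold colSign
  rw [if_neg (fun hh => hh.2 h2), if_neg (fun hh => hh.2 h1)]

lemma colSign_eq_none_neither {n : ℕ} {t : Filling} {i c : ℕ}
    (h1 : ¬ colHas n t i c) (h2 : ¬ colHas n t (i + 1) c) : colSign n t i c = none := by
  unfold colSign
  rw [if_neg (fun hh => h1 hh.1), if_neg (fun hh => h2 hh.1)]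

lemma colSign_true_elim {n : ℕ} {t : Filling} {i c : ℕ}
    (h : colSign n t i c = some true) : colHas n t i c ∧ ¬ colHas n t (i + 1) c := by
  by_cases h1 : colHas n t i c ∧ ¬ colHas n t (i + 1) c
  · exact h1
  · unfold colSign at h
    rw [if_neg h1] at h
    split_ifs at h with h2 <;> simp at h

lemma colSign_false_elim {n : ℕ} {t : Filling} {i c : ℕ}
    (h : colSign n t i c = some false) : colHas n t (i + 1) c ∧ ¬ colHas n t i c := by
  by_cases h2 : colHas n t (i + 1) c ∧ ¬ colHas n t i c
  · exact h2
  · unfold colSign at h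
    split_ifs at h with h1 <;> simp_all

/-! ### updateBox lemmas -/

lemma updateBox_self (t : Filling) (r c : ℕ) (A : Finset ℕ) : updateBox t r c A r c = A := by
  simp [updateBox]

lemma updateBox_ne (t : Filling) (r c : ℕ) (A : Finset ℕ) {r' c' : ℕ}
    (h : ¬ (r' = r ∧ c' = c)) : updateBox t r c A r' c' = t r' c' := by
  simp only [updateBox, if_neg h]

lemma colHas_update_ne_col {n : ℕ} {t : Filling} {r c : ℕ} {A : Finset ℕ} {a c' : ℕ}
    (h : c' ≠ c) : colHas n (updateBox t r c A) a c' ↔ colHas n t a c' := by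
  unfold colHas
  constructor
  · rintro ⟨r', h1, h2⟩
    rw [updateBox_ne t r c A (fun hh => h hh.2)] at h2
    exact ⟨r', h1, h2⟩
  · rintro ⟨r', h1, h2⟩
    refine ⟨r', h1, ?_⟩
    rwa [updateBox_ne t r c A (fun hh => h hh.2)]

lemma colSign_update_ne_col {n : ℕ} {t : Filling} {r c : ℕ} {A : Finset ℕ} {i c' : ℕ}
    (h : c' ≠ c) : colSign n (updateBox t r c A) i c' = colSign n t i c' := by
  unfold colSign
  simp only [colHas_update_ne_col h]

/-! ### Elimination and introduction for the raw operators -/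

lemma fRaw_elim {n : ℕ} {lam : ℕ → ℕ} {i : ℕ} {t t' : Filling}
    (h : fRaw n lam i t = some t') :
    ∃ c r, fBoxCol n (lam 0) t i c ∧ r < n ∧ i ∈ t r c ∧
      ((i ∉ t r (c + 1) ∧ t' = updateBox t r c (insert (i + 1) ((t r c).erase i))) ∨
       (i ∈ t r (c + 1) ∧
         t' = updateBox (updateBox t r (c + 1) ((t r (c + 1)).erase i)) r c
           (insert (i + 1) (t r c)))) := by
  unfold fRaw at h
  by_cases hex : ∃ c, fBoxCol n (lam 0) t i c
  · rw [dif_pos hex] at h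
    by_cases hrex : ∃ r, r < n ∧ i ∈ t r (Classical.choose hex)
    · rw [dif_pos hrex] at h
      have hrs := Classical.choose_spec hrex
      by_cases hi2 : i ∈ t (Classical.choose hrex) (Classical.choose hex + 1)
      · rw [if_pos hi2] at h
        exact ⟨_, _, Classical.choose_spec hex, hrs.1, hrs.2,
          Or.inr ⟨hi2, (Option.some.inj h).symm⟩⟩
      · rw [if_neg hi2] at h
        exact ⟨_, _, Classical.choose_spec hex, hrs.1, hrs.2,
          Or.inl ⟨hi2, (Option.some.inj h).symm⟩⟩
    · rw [dif_neg hrex] at h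
      exact absurd h (by simp)
  · rw [dif_neg hex] at h
    exact absurd h (by simp)

lemma eRaw_elim {n : ℕ} {lam : ℕ → ℕ} {i : ℕ} {t t' : Filling}
    (h : eRaw n lam i t = some t') :
    ∃ c r, eBoxCol n (lam 0) t i c ∧ r < n ∧ (i + 1) ∈ t r c ∧
      ((¬ (0 < c ∧ (i + 1) ∈ t r (c - 1)) ∧
         t' = updateBox t r c (insert i ((t r c).erase (i + 1)))) ∨
       ((0 < c ∧ (i + 1) ∈ t r (c - 1)) ∧
         t' = updateBox (updateBox t r (c - 1) ((t r (c - 1)).erase (i + 1))) r c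
           (insert i (t r c)))) := by
  unfold eRaw at h
  by_cases hex : ∃ c, eBoxCol n (lam 0) t i c
  · rw [dif_pos hex] at h
    by_cases hrex : ∃ r, r < n ∧ (i + 1) ∈ t r (Classical.choose hex)
    · rw [dif_pos hrex] at h
      have hrs := Classical.choose_spec hrex
      by_cases hi2 : 0 < Classical.choose hex ∧
          (i + 1) ∈ t (Classical.choose hrex) (Classical.choose hex - 1)
      · rw [if_pos hi2] at h
        exact ⟨_, _, Classical.choose_spec hex, hrs.1, hrs.2,
          Or.inr ⟨hi2, (Option.some.inj h).symm⟩⟩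
      · rw [if_neg hi2] at h
        exact ⟨_, _, Classical.choose_spec hex, hrs.1, hrs.2,
          Or.inl ⟨hi2, (Option.some.inj h).symm⟩⟩
    · rw [dif_neg hrex] at h
      exact absurd h (by simp)
  · rw [dif_neg hex] at h
    exact absurd h (by simp)

lemma fRaw_intro {n : ℕ} {lam : ℕ → ℕ} {i : ℕ} {t : Filling} {c r : ℕ}
    (hsh : IsPartitionShape n lam) (hT : IsSVT n lam t)
    (hfb : fBoxCol n (lam 0) t i c) (hrn : r < n) (hi : i ∈ t r c) :
    fRaw n lam i t =
      if i ∈ t r (c + 1) then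
        some (updateBox (updateBox t r (c + 1) ((t r (c + 1)).erase i)) r c
          (insert (i + 1) (t r c)))
      else some (updateBox t r c (insert (i + 1) ((t r c).erase i))) := by
  have hex : ∃ c, fBoxCol n (lam 0) t i c := ⟨c, hfb⟩
  unfold fRaw
  rw [dif_pos hex]
  have hce : Classical.choose hex = c := fBoxCol_unique (Classical.choose_spec hex) hfb
  rw [hce]
  have hrex : ∃ r, r < n ∧ i ∈ t r c := ⟨r, hrn, hi⟩
  rw [dif_pos hrex]
  have hre : Classical.choose hrex = r :=
    row_unique hsh hT (Classical.choose_spec hrex).2 hi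
  rw [hre]

lemma eRaw_intro {n : ℕ} {lam : ℕ → ℕ} {i : ℕ} {t : Filling} {c r : ℕ}
    (hsh : IsPartitionShape n lam) (hT : IsSVT n lam t)
    (heb : eBoxCol n (lam 0) t i c) (hrn : r < n) (hi : (i + 1) ∈ t r c) :
    eRaw n lam i t =
      if 0 < c ∧ (i + 1) ∈ t r (c - 1) then
        some (updateBox (updateBox t r (c - 1) ((t r (c - 1)).erase (i + 1))) r c
          (insert i (t r c)))
      else some (updateBox t r c (insert i ((t r c).erase (i + 1)))) := by
  have hex : ∃ c, eBoxCol n (lam 0) t i c := ⟨c, heb⟩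
  unfold eRaw
  rw [dif_pos hex]
  have hce : Classical.choose hex = c := eBoxCol_unique (Classical.choose_spec hex) heb
  rw [hce]
  have hrex : ∃ r, r < n ∧ (i + 1) ∈ t r c := ⟨r, hrn, hi⟩
  rw [dif_pos hrex]
  have hre : Classical.choose hrex = r :=
    row_unique hsh hT (Classical.choose_spec hrex).2 hi
  rw [hre]

lemma fRaw_none {n : ℕ} {lam : ℕ → ℕ} {i : ℕ} {t : Filling}
    (h : ¬ ∃ c, fBoxCol n (lam 0) t i c) : fRaw n lam i t = none := by
  unfold fRaw
  rw [dif_neg h]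

lemma eRaw_none {n : ℕ} {lam : ℕ → ℕ} {i : ℕ} {t : Filling}
    (h : ¬ ∃ c, eBoxCol n (lam 0) t i c) : eRaw n lam i t = none := by
  unfold eRaw
  rw [dif_neg h]

/-! ### wseg congruence -/

lemma wseg_congr {n : ℕ} {t t' : Filling} {i : ℕ} (s m : ℕ)
    (h : ∀ c', s ≤ c' → c' < s + m → colSign n t' i c' = colSign n t i c') :
    wseg n t' i s m = wseg n t i s m := by
  unfold wseg
  apply List.filterMap_congr
  intro x hx
  rw [List.mem_range'_1] at hx
  exact h x hx.1 hx.2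

/-! ### Case A of the operator f -/

section CaseA

lemma f_caseA {n : ℕ} {lam : ℕ → ℕ} {i : ℕ} {t : Filling} {c r : ℕ} (hsh : IsPartitionShape n lam) (hT : IsSVT n lam t)
    (hin : i < n) (hfb : fBoxCol n (lam 0) t i c) (hrn : r < n) (hi : i ∈ t r c)
    (hnotr : i ∉ t r (c + 1)) :
    IsSVT n lam (updateBox t r c (insert (i + 1) ((t r c).erase i))) ∧
    eRaw n lam i (updateBox t r c (insert (i + 1) ((t r c).erase i))) = some t ∧
    colSign n (updateBox t r c (insert (i + 1) ((t r c).erase i))) i c = some false ∧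
    (∀ c', c' ≠ c → colSign n (updateBox t r c (insert (i + 1) ((t r c).erase i))) i c'
      = colSign n t i c') := by
  set t' := updateBox t r c (insert (i + 1) ((t r c).erase i)) with ht'
  have hsgn : colSign n t i c = some true := ((plusCol_iff _ _ _ _ _).mp hfb.1).2.1
  obtain ⟨hhas, hno⟩ := colSign_true_elim hsgn
  have hnx : (i + 1) ∉ t r c := fun hmem => hno ⟨r, hrn, hmem⟩
  have hbox : t' r c = insert (i + 1) ((t r c).erase i) := updateBox_self t r c _
  have hother : ∀ r' c', ¬ (r' = r ∧ c' = c) → t' r' c' = t r' c' :=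
    fun r' c' h => updateBox_ne t r c _ h
  have hclam : c < lam r := mem_shape hT hi
  -- the new column signs
  have hsign' : colSign n t' i c = some false := by
    apply colSign_eq_false
    · exact ⟨r, hrn, by rw [hbox]; exact Finset.mem_insert_self _ _⟩
    · rintro ⟨r', hr', hmem⟩
      by_cases hre : r' = r
      · subst hre
        rw [hbox] at hmem
        rcases Finset.mem_insert.mp hmem with h | h
        · omega
        · exact absurd (Finset.mem_erase.mp h).1 (fun _ => (Finset.mem_erase.mp h).1 rfl)
      · rw [hother r' c (fun hh => hre hh.1)] at hmem
        exact hre (row_unique hsh hT hmem hi)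
  have hsignother : ∀ c', c' ≠ c → colSign n t' i c' = colSign n t i c' :=
    fun c' h => colSign_update_ne_col h
  -- t' is an SVT
  have hT' : IsSVT n lam t' := by
    refine ⟨?_, ?_, ?_, ?_, ?_⟩
    · intro r' c' h
      by_cases hrc : r' = r ∧ c' = c
      · obtain ⟨rfl, rfl⟩ := hrc
        exact ⟨i + 1, by rw [hbox]; exact Finset.mem_insert_self _ _⟩
      · rw [hother r' c' hrc]
        exact hT.boxNonempty r' c' h
    · intro r' c' h
      by_cases hrc : r' = r ∧ c' = c
      · obtain ⟨rfl, rfl⟩ := hrc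
        exact absurd hclam h
      · rw [hother r' c' hrc]
        exact hT.emptyOutside r' c' h
    · intro r' c' a ha
      by_cases hrc : r' = r ∧ c' = c
      · obtain ⟨rfl, rfl⟩ := hrc
        rw [hbox] at ha
        rcases Finset.mem_insert.mp ha with h | h
        · omega
        · exact hT.entryBounds r' c' a (Finset.mem_of_mem_erase h)
      · rw [hother r' c' hrc] at ha
        exact hT.entryBounds r' c' a ha
    · intro r' c' a b ha hb
      by_cases h1 : r' = r ∧ c' = c
      · obtain ⟨rfl, rfl⟩ := h1
        rw [hbox] at ha
        rw [hother r' (c' + 1) (fun hh => by omega)] at hb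
        rcases Finset.mem_insert.mp ha with h | h
        · have hbi : i ≤ b := hT.rowWeak r' c' i b hi hb
          have hbne : b ≠ i := fun he => hnotr (he ▸ hb)
          omega
        · exact hT.rowWeak r' c' a b (Finset.mem_of_mem_erase h) hb
      · by_cases h2 : r' = r ∧ c' + 1 = c
        · obtain ⟨rfl, hc2⟩ := h2
          rw [hother r' c' (fun hh => by omega)] at ha
          rw [hc2, hbox] at hb
          rcases Finset.mem_insert.mp hb with h | h
          · have : a ≤ i := hT.rowWeak r' c' a i ha (by rw [hc2]; exact hi)
            omega
          · exact hT.rowWeak r' c' a b ha (by rw [hc2]; exact Finset.mem_of_mem_erase h)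
        · rw [hother r' c' h1] at ha
          rw [hother r' (c' + 1) h2] at hb
          exact hT.rowWeak r' c' a b ha hb
    · intro r' c' a b ha hb
      by_cases h1 : r' = r ∧ c' = c
      · obtain ⟨rfl, rfl⟩ := h1
        rw [hbox] at ha
        rw [hother (r' + 1) c' (fun hh => by omega)] at hb
        rcases Finset.mem_insert.mp ha with h | h
        · have h3 : i < b := hT.colStrict r' c' i b hi hb
          have h4 : b ≠ i + 1 := fun he => hno ⟨r' + 1, mem_rowlt hsh hT hb, he ▸ hb⟩
          omega
        · exact hT.colStrict r' c' a b (Finset.mem_of_mem_erase h) hb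
      · by_cases h2 : r' + 1 = r ∧ c' = c
        · obtain ⟨hr2, rfl⟩ := h2
          rw [hother r' c' (fun hh => by omega)] at ha
          rw [hr2, hbox] at hb
          rcases Finset.mem_insert.mp hb with h | h
          · have : a < i := hT.colStrict r' c' a i ha (by rw [hr2]; exact hi)
            omega
          · exact hT.colStrict r' c' a b ha (by rw [hr2]; exact Finset.mem_of_mem_erase h)
        · rw [hother r' c' h1] at ha
          rw [hother (r' + 1) c' h2] at hb
          exact hT.colStrict r' c' a b ha hb
  -- eBoxCol for t' at column c
  have hch := (fBoxCol_iff n (lam 0) t i c).mp hfb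
  have hw1 : wseg n t' i 0 c = wseg n t i 0 c :=
    wseg_congr 0 c (fun c' _ h2 => hsignother c' (by omega))
  have hw2 : wseg n t' i (c + 1) (lam 0 - (c + 1)) = wseg n t i (c + 1) (lam 0 - (c + 1)) :=
    wseg_congr _ _ (fun c' h1 _ => hsignother c' (by omega))
  have heb : eBoxCol n (lam 0) t' i c := by
    rw [eBoxCol_iff]
    exact ⟨hch.1, hsign', by rw [hw1]; exact hch.2.2.1, by rw [hw2]; exact hch.2.2.2⟩
  -- apply eRaw
  have hmem' : (i + 1) ∈ t' r c := by rw [hbox]; exact Finset.mem_insert_self _ _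
  have hcond : ¬ (0 < c ∧ (i + 1) ∈ t' r (c - 1)) := by
    rintro ⟨hc0, hmem⟩
    rw [hother r (c - 1) (fun hh => by omega)] at hmem
    have := hT.rowWeak r (c - 1) (i + 1) i hmem (by rw [show c - 1 + 1 = c by omega]; exact hi)
    omega
  have heq : updateBox t' r c (insert i ((t' r c).erase (i + 1))) = t := by
    funext r' c'
    by_cases hrc : r' = r ∧ c' = c
    · obtain ⟨rfl, rfl⟩ := hrc
      rw [updateBox_self, hbox]
      have hnotin : (i + 1) ∉ (t r' c').erase i := fun hmem => hnx (Finset.mem_of_mem_erase hmem)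
      rw [Finset.erase_insert hnotin]
      exact Finset.insert_erase hi
    · rw [updateBox_ne _ _ _ _ hrc, hother r' c' hrc]
  refine ⟨hT', ?_, hsign', hsignother⟩
  rw [eRaw_intro hsh hT' heb hrn hmem', if_neg hcond, heq]

end CaseA

/-! ### Case B of the operator f -/

lemma f_caseB {n : ℕ} {lam : ℕ → ℕ} {i : ℕ} {t : Filling} {c r : ℕ}
    (hsh : IsPartitionShape n lam) (hT : IsSVT n lam t)
    (hin : i < n) (hfb : fBoxCol n (lam 0) t i c) (hrn : r < n) (hi : i ∈ t r c)
    (hi2 : i ∈ t r (c + 1)) :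
    (i + 1) ∈ t r (c + 1) ∧
    IsSVT n lam (updateBox (updateBox t r (c + 1) ((t r (c + 1)).erase i)) r c
      (insert (i + 1) (t r c))) ∧
    eRaw n lam i (updateBox (updateBox t r (c + 1) ((t r (c + 1)).erase i)) r c
      (insert (i + 1) (t r c))) = some t ∧
    colSign n (updateBox (updateBox t r (c + 1) ((t r (c + 1)).erase i)) r c
      (insert (i + 1) (t r c))) i c = none ∧
    colSign n (updateBox (updateBox t r (c + 1) ((t r (c + 1)).erase i)) r c
      (insert (i + 1) (t r c))) i (c + 1) = some false ∧
    colSign n t i (c + 1) = none ∧ c + 1 < lam 0 ∧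
    (∀ c', c' ≠ c → c' ≠ c + 1 → colSign n (updateBox (updateBox t r (c + 1)
      ((t r (c + 1)).erase i)) r c (insert (i + 1) (t r c))) i c' = colSign n t i c') := by
  set t' := updateBox (updateBox t r (c + 1) ((t r (c + 1)).erase i)) r c
    (insert (i + 1) (t r c)) with ht'
  have hch := (fBoxCol_iff n (lam 0) t i c).mp hfb
  have hsgn : colSign n t i c = some true := hch.2.1
  obtain ⟨hhas, hno⟩ := colSign_true_elim hsgn
  have hnx : (i + 1) ∉ t r c := fun hmem => hno ⟨r, hrn, hmem⟩
  have hclam : c < lam r := mem_shape hT hi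
  have hclam1 : c + 1 < lam r := mem_shape hT hi2
  have hc1N : c + 1 < lam 0 := lt_of_lt_of_le hclam1 (lam_anti hsh (Nat.zero_le r))
  have hboxc : t' r c = insert (i + 1) (t r c) := updateBox_self _ r c _
  have hboxc1 : t' r (c + 1) = (t r (c + 1)).erase i := by
    rw [ht', updateBox_ne _ _ _ _ (by omega : ¬ (r = r ∧ c + 1 = c))]
    exact updateBox_self _ _ _ _
  have hother : ∀ r' c', ¬ (r' = r ∧ c' = c) → ¬ (r' = r ∧ c' = c + 1) →
      t' r' c' = t r' c' := by
    intro r' c' h1 h2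
    rw [ht', updateBox_ne _ _ _ _ h1, updateBox_ne _ _ _ _ h2]
  -- the key structural fact : i+1 lies in box (r, c+1)
  have hi1p : (i + 1) ∈ t r (c + 1) := by
    have hhas1 : colHas n t (i + 1) (c + 1) := by
      by_contra hnone
      have hst : colSign n t i (c + 1) = some true :=
        colSign_eq_true ⟨r, hrn, hi2⟩ hnone
      have hpc : PlusCol n (lam 0) t i (c + 1) := by
        rw [plusCol_iff]
        refine ⟨hc1N, hst, ?_⟩
        rw [wseg_append n t i 0 c 1, wseg_one, Nat.zero_add, hsgn]
        rw [mctr_append, hch.2.2.1]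
        rfl
      have := hfb.2 (c + 1) hpc
      omega
    obtain ⟨r1, hr1n, hmem1⟩ := hhas1
    rcases lt_trichotomy r1 r with hlt | heq | hgt
    · have := col_lt hsh hT hlt hmem1 hi2
      omega
    · exact heq ▸ hmem1
    · exfalso
      have hcl : c < lam r1 := by have := mem_shape hT hmem1; omega
      obtain ⟨b, hb⟩ := hT.boxNonempty r1 c hcl
      have h1 : i < b := col_lt hsh hT hgt hi hb
      have h2 : b ≤ i + 1 := hT.rowWeak r1 c b (i + 1) hb hmem1
      have h3 : b = i + 1 := by omega
      exact hno ⟨r1, hr1n, h3 ▸ hb⟩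
  -- signs of t'
  have hsignc' : colSign n t' i c = none :=
    colSign_eq_none_both ⟨r, hrn, by rw [hboxc]; exact Finset.mem_insert_of_mem hi⟩
      ⟨r, hrn, by rw [hboxc]; exact Finset.mem_insert_self _ _⟩
  have hsignc1' : colSign n t' i (c + 1) = some false := by
    apply colSign_eq_false
    · exact ⟨r, hrn, by rw [hboxc1]; exact Finset.mem_erase.mpr ⟨by omega, hi1p⟩⟩
    · rintro ⟨r2, hr2, hm2⟩
      by_cases hre : r2 = r
      · rw [hre, hboxc1] at hm2
        exact (Finset.mem_erase.mp hm2).1 rfl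
      · rw [hother r2 (c + 1) (by omega) (fun hh => hre hh.1)] at hm2
        exact hre (row_unique hsh hT hm2 hi2)
  have hsignt1 : colSign n t i (c + 1) = none :=
    colSign_eq_none_both ⟨r, hrn, hi2⟩ ⟨r, hrn, hi1p⟩
  have hsignother : ∀ c', c' ≠ c → c' ≠ c + 1 → colSign n t' i c' = colSign n t i c' := by
    intro c' h1 h2
    unfold colSign
    have e1 : ∀ a, colHas n t' a c' ↔ colHas n t a c' := by
      intro a
      unfold colHas
      constructor
      · rintro ⟨r2, hr2, hm2⟩
        rw [hother r2 c' (fun hh => h1 hh.2) (fun hh => h2 hh.2)] at hm2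
        exact ⟨r2, hr2, hm2⟩
      · rintro ⟨r2, hr2, hm2⟩
        refine ⟨r2, hr2, ?_⟩
        rwa [hother r2 c' (fun hh => h1 hh.2) (fun hh => h2 hh.2)]
    simp only [e1]
  -- elements of the two boxes
  have hXle : ∀ a ∈ t r c, a ≤ i := fun a ha => hT.rowWeak r c a i ha hi2
  have hYge : ∀ b ∈ t r (c + 1), i ≤ b := fun b hb => hT.rowWeak r c i b hi hb
  -- t' is an SVT
  have hT' : IsSVT n lam t' := by
    refine ⟨?_, ?_, ?_, ?_, ?_⟩
    · intro ra ca h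
      by_cases h1 : ra = r ∧ ca = c
      · refine ⟨i + 1, ?_⟩
        rw [h1.1, h1.2, hboxc]
        exact Finset.mem_insert_self _ _
      · by_cases h2 : ra = r ∧ ca = c + 1
        · refine ⟨i + 1, ?_⟩
          rw [h2.1, h2.2, hboxc1]
          exact Finset.mem_erase.mpr ⟨by omega, hi1p⟩
        · rw [hother ra ca h1 h2]
          exact hT.boxNonempty ra ca h
    · intro ra ca h
      by_cases h1 : ra = r ∧ ca = c
      · rw [h1.1, h1.2] at h
        exact absurd hclam h
      · by_cases h2 : ra = r ∧ ca = c + 1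
        · rw [h2.1, h2.2] at h
          exact absurd hclam1 h
        · rw [hother ra ca h1 h2]
          exact hT.emptyOutside ra ca h
    · intro ra ca a ha
      by_cases h1 : ra = r ∧ ca = c
      · rw [h1.1, h1.2, hboxc] at ha
        rcases Finset.mem_insert.mp ha with h | h
        · omega
        · exact hT.entryBounds r c a h
      · by_cases h2 : ra = r ∧ ca = c + 1
        · rw [h2.1, h2.2, hboxc1] at ha
          exact hT.entryBounds r (c + 1) a (Finset.mem_of_mem_erase ha)
        · rw [hother ra ca h1 h2] at ha
          exact hT.entryBounds ra ca a ha
    · intro ra ca a b ha hb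
      by_cases hra : ra = r
      · by_cases hc1 : ca = c
        · rw [hra, hc1, hboxc] at ha
          rw [hra, hc1, hboxc1] at hb
          have hbY := Finset.mem_of_mem_erase hb
          rcases Finset.mem_insert.mp ha with h | h
          · have h3 : i ≤ b := hYge b hbY
            have h4 : b ≠ i := (Finset.mem_erase.mp hb).1
            omega
          · exact hT.rowWeak r c a b h hbY
        · by_cases hc2 : ca = c + 1
          · rw [hra, hc2, hboxc1] at ha
            rw [hra, hc2, hother r (c + 1 + 1) (by omega) (by omega)] at hb
            exact hT.rowWeak r (c + 1) a b (Finset.mem_of_mem_erase ha) hb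
          · by_cases hc3 : ca + 1 = c
            · rw [hra, hother r ca (by omega) (by omega)] at ha
              rw [hra, hc3, hboxc] at hb
              rcases Finset.mem_insert.mp hb with h | h
              · have : a ≤ i := hT.rowWeak r ca a i ha (by rw [hc3]; exact hi)
                omega
              · exact hT.rowWeak r ca a b ha (by rw [hc3]; exact h)
            · rw [hra, hother r ca (by omega) (by omega)] at ha
              rw [hra, hother r (ca + 1) (by omega) (by omega)] at hb
              exact hT.rowWeak r ca a b ha hb
      · rw [hother ra ca (fun hh => hra hh.1) (fun hh => hra hh.1)] at ha
        rw [hother ra (ca + 1) (fun hh => hra hh.1) (fun hh => hra hh.1)] at hb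
        exact hT.rowWeak ra ca a b ha hb
    · intro ra ca a b ha hb
      by_cases hra : ra = r
      · rw [hra] at ha hb
        rw [hother (r + 1) ca (by omega) (by omega)] at hb
        by_cases hc1 : ca = c
        · rw [hc1, hboxc] at ha
          rw [hc1] at hb
          rcases Finset.mem_insert.mp ha with h | h
          · have h3 : i < b := hT.colStrict r c i b hi hb
            have h4 : b ≠ i + 1 := fun he => hno ⟨r + 1, mem_rowlt hsh hT hb, he ▸ hb⟩
            omega
          · exact hT.colStrict r c a b h hb
        · by_cases hc2 : ca = c + 1
          · rw [hc2, hboxc1] at ha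
            rw [hc2] at hb
            exact hT.colStrict r (c + 1) a b (Finset.mem_of_mem_erase ha) hb
          · rw [hother r ca (by omega) (by omega)] at ha
            exact hT.colStrict r ca a b ha hb
      · by_cases hra1 : ra + 1 = r
        · rw [hother ra ca (fun hh => hra hh.1) (fun hh => hra hh.1)] at ha
          rw [hra1] at hb
          by_cases hc1 : ca = c
          · rw [hc1, hboxc] at hb
            rw [hc1] at ha
            rcases Finset.mem_insert.mp hb with h | h
            · have : a < i := hT.colStrict ra c a i ha (by rw [hra1]; exact hi)
              omega
            · exact hT.colStrict ra c a b ha (by rw [hra1]; exact h)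
          · by_cases hc2 : ca = c + 1
            · rw [hc2, hboxc1] at hb
              rw [hc2] at ha
              exact hT.colStrict ra (c + 1) a b ha
                (by rw [hra1]; exact Finset.mem_of_mem_erase hb)
            · rw [hother r ca (by omega) (by omega)] at hb
              rw [← hra1] at hb
              exact hT.colStrict ra ca a b ha hb
        · rw [hother ra ca (fun hh => hra hh.1) (fun hh => hra hh.1)] at ha
          rw [hother (ra + 1) ca (fun hh => hra1 hh.1) (fun hh => hra1 hh.1)] at hb
          exact hT.colStrict ra ca a b ha hb
  -- eBoxCol for t' at column c+1
  have hw1 : wseg n t' i 0 c = wseg n t i 0 c :=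
    wseg_congr 0 c (fun c' _ h2 => hsignother c' (by omega) (by omega))
  have hw2 : wseg n t' i (c + 2) (lam 0 - (c + 2)) = wseg n t i (c + 2) (lam 0 - (c + 2)) :=
    wseg_congr _ _ (fun c' h1 _ => hsignother c' (by omega) (by omega))
  have hpt2 : pctr (wseg n t i (c + 2) (lam 0 - (c + 2))) = 0 := by
    have hs : wseg n t i (c + 1) (lam 0 - (c + 1)) =
        (colSign n t i (c + 1)).toList ++ wseg n t i (c + 2) (lam 0 - (c + 2)) := by
      rw [show lam 0 - (c + 1) = (lam 0 - (c + 2)) + 1 by omega, wseg_succ]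
    rw [hs, hsignt1] at hch
    exact hch.2.2.2
  have heb : eBoxCol n (lam 0) t' i (c + 1) := by
    rw [eBoxCol_iff]
    refine ⟨hc1N, hsignc1', ?_, ?_⟩
    · rw [wseg_append n t' i 0 c 1, wseg_one, Nat.zero_add, hsignc', mctr_append, hw1,
        hch.2.2.1]
      rfl
    · rw [show c + 1 + 1 = c + 2 from rfl, hw2]
      exact hpt2
  -- apply eRaw
  have hmem' : (i + 1) ∈ t' r (c + 1) := by
    rw [hboxc1]
    exact Finset.mem_erase.mpr ⟨by omega, hi1p⟩
  have hcond : 0 < c + 1 ∧ (i + 1) ∈ t' r (c + 1 - 1) := by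
    refine ⟨by omega, ?_⟩
    rw [show c + 1 - 1 = c from rfl, hboxc]
    exact Finset.mem_insert_self _ _
  have heq : updateBox (updateBox t' r (c + 1 - 1) ((t' r (c + 1 - 1)).erase (i + 1))) r
      (c + 1) (insert i (t' r (c + 1))) = t := by
    rw [show c + 1 - 1 = c from rfl]
    funext ra ca
    by_cases h2 : ra = r ∧ ca = c + 1
    · rw [h2.1, h2.2, updateBox_self, hboxc1]
      exact Finset.insert_erase hi2
    · rw [updateBox_ne _ _ _ _ h2]
      by_cases h1 : ra = r ∧ ca = c
      · rw [h1.1, h1.2, updateBox_self, hboxc]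
        exact Finset.erase_insert hnx
      · rw [updateBox_ne _ _ _ _ h1]
        exact hother ra ca h1 h2
  refine ⟨hi1p, hT', ?_, hsignc', hsignc1', hsignt1, hc1N, hsignother⟩
  rw [eRaw_intro hsh hT' heb hrn hmem', if_pos hcond, heq]

/-! ### Case A of the operator e -/

lemma e_caseA {n : ℕ} {lam : ℕ → ℕ} {i : ℕ} {t' : Filling} {c r : ℕ}
    (hsh : IsPartitionShape n lam) (hT' : IsSVT n lam t')
    (hi1 : 1 ≤ i) (hin : i < n) (heb : eBoxCol n (lam 0) t' i c) (hrn : r < n)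
    (hi : (i + 1) ∈ t' r c) (hcond : ¬ (0 < c ∧ (i + 1) ∈ t' r (c - 1))) :
    IsSVT n lam (updateBox t' r c (insert i ((t' r c).erase (i + 1)))) ∧
    fRaw n lam i (updateBox t' r c (insert i ((t' r c).erase (i + 1)))) = some t' ∧
    colSign n (updateBox t' r c (insert i ((t' r c).erase (i + 1)))) i c = some true ∧
    (∀ c', c' ≠ c → colSign n (updateBox t' r c (insert i ((t' r c).erase (i + 1)))) i c'
      = colSign n t' i c') := by
  set t := updateBox t' r c (insert i ((t' r c).erase (i + 1))) with htdef
  have hch := (eBoxCol_iff n (lam 0) t' i c).mp heb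
  have hsgn : colSign n t' i c = some false := hch.2.1
  obtain ⟨hhasp, hnoi⟩ := colSign_false_elim hsgn
  have hnx : i ∉ t' r c := fun hmem => hnoi ⟨r, hrn, hmem⟩
  have hbox : t r c = insert i ((t' r c).erase (i + 1)) := updateBox_self t' r c _
  have hother : ∀ r' c', ¬ (r' = r ∧ c' = c) → t r' c' = t' r' c' :=
    fun r' c' h => updateBox_ne t' r c _ h
  have hclam : c < lam r := mem_shape hT' hi
  have hsign' : colSign n t i c = some true := by
    apply colSign_eq_true
    · exact ⟨r, hrn, by rw [hbox]; exact Finset.mem_insert_self _ _⟩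
    · rintro ⟨r2, hr2, hm2⟩
      by_cases hre : r2 = r
      · rw [hre, hbox] at hm2
        rcases Finset.mem_insert.mp hm2 with h | h
        · omega
        · exact (Finset.mem_erase.mp h).1 rfl
      · rw [hother r2 c (fun hh => hre hh.1)] at hm2
        exact hre (row_unique hsh hT' hm2 hi)
  have hsignother : ∀ c', c' ≠ c → colSign n t i c' = colSign n t' i c' :=
    fun c' h => colSign_update_ne_col h
  have hT : IsSVT n lam t := by
    refine ⟨?_, ?_, ?_, ?_, ?_⟩
    · intro ra ca h
      by_cases h1 : ra = r ∧ ca = c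
      · exact ⟨i, by rw [h1.1, h1.2, hbox]; exact Finset.mem_insert_self _ _⟩
      · rw [hother ra ca h1]
        exact hT'.boxNonempty ra ca h
    · intro ra ca h
      by_cases h1 : ra = r ∧ ca = c
      · rw [h1.1, h1.2] at h
        exact absurd hclam h
      · rw [hother ra ca h1]
        exact hT'.emptyOutside ra ca h
    · intro ra ca a ha
      by_cases h1 : ra = r ∧ ca = c
      · rw [h1.1, h1.2, hbox] at ha
        rcases Finset.mem_insert.mp ha with h | h
        · omega
        · exact hT'.entryBounds r c a (Finset.mem_of_mem_erase h)
      · rw [hother ra ca h1] at ha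
        exact hT'.entryBounds ra ca a ha
    · intro ra ca a b ha hb
      by_cases hra : ra = r
      · by_cases hc1 : ca = c
        · rw [hra, hc1, hbox] at ha
          rw [hra, hc1, hother r (c + 1) (by omega)] at hb
          rcases Finset.mem_insert.mp ha with h | h
          · have h3 : i + 1 ≤ b := hT'.rowWeak r c (i + 1) b hi hb
            omega
          · exact hT'.rowWeak r c a b (Finset.mem_of_mem_erase h) hb
        · by_cases hc2 : ca + 1 = c
          · rw [hra, hother r ca (by omega)] at ha
            rw [hra, hc2, hbox] at hb
            have hc0 : 0 < c := by omega
            have hane : a ≠ i + 1 := by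
              intro he
              exact (by push_neg at hcond; exact hcond hc0 : (i + 1) ∉ t' r (c - 1))
                (by rw [show c - 1 = ca by omega] at *; exact he ▸ ha)
            have hale : a ≤ i + 1 := hT'.rowWeak r ca a (i + 1) ha (by rw [hc2]; exact hi)
            rcases Finset.mem_insert.mp hb with h | h
            · omega
            · exact hT'.rowWeak r ca a b ha (by rw [hc2]; exact Finset.mem_of_mem_erase h)
          · rw [hra, hother r ca (by omega)] at ha
            rw [hra, hother r (ca + 1) (by omega)] at hb
            exact hT'.rowWeak r ca a b ha hb
      · rw [hother ra ca (fun hh => hra hh.1)] at ha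
        rw [hother ra (ca + 1) (fun hh => hra hh.1)] at hb
        exact hT'.rowWeak ra ca a b ha hb
    · intro ra ca a b ha hb
      by_cases hra : ra = r
      · rw [hra] at ha hb
        rw [hother (r + 1) ca (by omega)] at hb
        by_cases hc1 : ca = c
        · rw [hc1, hbox] at ha
          rw [hc1] at hb
          rcases Finset.mem_insert.mp ha with h | h
          · have h3 : i + 1 < b := hT'.colStrict r c (i + 1) b hi hb
            omega
          · exact hT'.colStrict r c a b (Finset.mem_of_mem_erase h) hb
        · rw [hother r ca (by omega)] at ha
          exact hT'.colStrict r ca a b ha hb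
      · by_cases hra1 : ra + 1 = r
        · rw [hother ra ca (fun hh => hra hh.1)] at ha
          rw [hra1] at hb
          by_cases hc1 : ca = c
          · rw [hc1, hbox] at hb
            rw [hc1] at ha
            rcases Finset.mem_insert.mp hb with h | h
            · have h3 : a < i + 1 := hT'.colStrict ra c a (i + 1) ha (by rw [hra1]; exact hi)
              have h4 : a ≠ i := fun he => hnoi ⟨ra, mem_rowlt hsh hT' ha, he ▸ ha⟩
              omega
            · exact hT'.colStrict ra c a b ha (by rw [hra1]; exact Finset.mem_of_mem_erase h)
          · rw [hother r ca (by omega)] at hb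
            rw [← hra1] at hb
            exact hT'.colStrict ra ca a b ha hb
        · rw [hother ra ca (fun hh => hra hh.1)] at ha
          rw [hother (ra + 1) ca (fun hh => hra1 hh.1)] at hb
          exact hT'.colStrict ra ca a b ha hb
  have hw1 : wseg n t i 0 c = wseg n t' i 0 c :=
    wseg_congr 0 c (fun c' _ h2 => hsignother c' (by omega))
  have hw2 : wseg n t i (c + 1) (lam 0 - (c + 1)) = wseg n t' i (c + 1) (lam 0 - (c + 1)) :=
    wseg_congr _ _ (fun c' h1 _ => hsignother c' (by omega))
  have hfb : fBoxCol n (lam 0) t i c := by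
    rw [fBoxCol_iff]
    exact ⟨hch.1, hsign', by rw [hw1]; exact hch.2.2.1, by rw [hw2]; exact hch.2.2.2⟩
  have hmem : i ∈ t r c := by rw [hbox]; exact Finset.mem_insert_self _ _
  have hnotr : i ∉ t r (c + 1) := by
    rw [hother r (c + 1) (by omega)]
    intro hmem2
    have := hT'.rowWeak r c (i + 1) i hi hmem2
    omega
  have heq : updateBox t r c (insert (i + 1) ((t r c).erase i)) = t' := by
    funext ra ca
    by_cases h1 : ra = r ∧ ca = c
    · rw [h1.1, h1.2, updateBox_self, hbox]
      have hnotin : i ∉ (t' r c).erase (i + 1) := fun hm => hnx (Finset.mem_of_mem_erase hm)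
      rw [Finset.erase_insert hnotin]
      exact Finset.insert_erase hi
    · rw [updateBox_ne _ _ _ _ h1]
      exact hother ra ca h1
  refine ⟨hT, ?_, hsign', hsignother⟩
  rw [fRaw_intro hsh hT hfb hrn hmem, if_neg hnotr, heq]

/-! ### Case B of the operator e -/

lemma e_caseB {n : ℕ} {lam : ℕ → ℕ} {i : ℕ} {t' : Filling} {c r : ℕ}
    (hsh : IsPartitionShape n lam) (hT' : IsSVT n lam t')
    (hi1 : 1 ≤ i) (hin : i < n) (heb : eBoxCol n (lam 0) t' i c) (hrn : r < n)
    (hi : (i + 1) ∈ t' r c) (hc0 : 0 < c) (hprev : (i + 1) ∈ t' r (c - 1)) :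
    i ∈ t' r (c - 1) ∧
    IsSVT n lam (updateBox (updateBox t' r (c - 1) ((t' r (c - 1)).erase (i + 1))) r c
      (insert i (t' r c))) ∧
    fRaw n lam i (updateBox (updateBox t' r (c - 1) ((t' r (c - 1)).erase (i + 1))) r c
      (insert i (t' r c))) = some t' := by
  set t := updateBox (updateBox t' r (c - 1) ((t' r (c - 1)).erase (i + 1))) r c
    (insert i (t' r c)) with htdef
  have hsucc : c - 1 + 1 = c := by omega
  have hch := (eBoxCol_iff n (lam 0) t' i c).mp heb
  have hsgn : colSign n t' i c = some false := hch.2.1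
  obtain ⟨hhasp, hnoi⟩ := colSign_false_elim hsgn
  have hnx : i ∉ t' r c := fun hmem => hnoi ⟨r, hrn, hmem⟩
  have hclam : c < lam r := mem_shape hT' hi
  have hclamm : c - 1 < lam r := by omega
  have hcm1N : c - 1 < lam 0 := by have := hch.1; omega
  have hboxm : t r (c - 1) = (t' r (c - 1)).erase (i + 1) := by
    rw [htdef, updateBox_ne _ _ _ _ (by omega : ¬ (r = r ∧ c - 1 = c))]
    exact updateBox_self _ _ _ _
  have hboxc : t r c = insert i (t' r c) := updateBox_self _ r c _
  have hother : ∀ r' c', ¬ (r' = r ∧ c' = c - 1) → ¬ (r' = r ∧ c' = c) →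
      t r' c' = t' r' c' := by
    intro r' c' h1 h2
    rw [htdef, updateBox_ne _ _ _ _ h2, updateBox_ne _ _ _ _ h1]
  -- the key structural fact : i lies in box (r, c-1) of t'
  have hip : i ∈ t' r (c - 1) := by
    have hhasm : colHas n t' i (c - 1) := by
      by_contra hnone
      have hsf : colSign n t' i (c - 1) = some false :=
        colSign_eq_false ⟨r, hrn, hprev⟩ hnone
      have hmc : MinusCol n (lam 0) t' i (c - 1) := by
        rw [minusCol_iff]
        refine ⟨by omega, hsf, ?_⟩
        rw [hsucc, show lam 0 - c = (lam 0 - (c + 1)) + 1 by have := hch.1; omega,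
          wseg_succ, hsgn]
        simp only [Option.toList_some, List.singleton_append]
        rw [pctr_cons_false, hch.2.2.2]
      have := heb.2 (c - 1) hmc
      omega
    obtain ⟨r2, hr2n, hm2⟩ := hhasm
    rcases lt_trichotomy r2 r with hlt | hEq | hgt
    · exfalso
      have hcl : c < lam r2 := lt_of_lt_of_le hclam (lam_anti hsh (le_of_lt hlt))
      obtain ⟨b, hb⟩ := hT'.boxNonempty r2 c hcl
      have h1 : i ≤ b := by
        have := hT'.rowWeak r2 (c - 1) i b hm2 (by rw [hsucc]; exact hb)
        exact this
      have h2 : b < i + 1 := col_lt hsh hT' hlt hb hi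
      have h3 : b = i := by omega
      exact hnoi ⟨r2, hr2n, h3 ▸ hb⟩
    · exact hEq ▸ hm2
    · exfalso
      have := col_lt hsh hT' hgt hprev hm2
      omega
  -- signs
  have hsignm : colSign n t i (c - 1) = some true := by
    apply colSign_eq_true
    · exact ⟨r, hrn, by rw [hboxm]; exact Finset.mem_erase.mpr ⟨by omega, hip⟩⟩
    · rintro ⟨r2, hr2, hm2⟩
      by_cases hre : r2 = r
      · rw [hre, hboxm] at hm2
        exact (Finset.mem_erase.mp hm2).1 rfl
      · rw [hother r2 (c - 1) (fun hh => hre hh.1) (by omega)] at hm2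
        exact hre (row_unique hsh hT' hm2 hprev)
  have hsignc : colSign n t i c = none :=
    colSign_eq_none_both ⟨r, hrn, by rw [hboxc]; exact Finset.mem_insert_self _ _⟩
      ⟨r, hrn, by rw [hboxc]; exact Finset.mem_insert_of_mem hi⟩
  have hsignt'm : colSign n t' i (c - 1) = none :=
    colSign_eq_none_both ⟨r, hrn, hip⟩ ⟨r, hrn, hprev⟩
  have hsignother : ∀ c', c' ≠ c - 1 → c' ≠ c → colSign n t i c' = colSign n t' i c' := by
    intro c' h1 h2
    unfold colSign
    have e1 : ∀ a, colHas n t a c' ↔ colHas n t' a c' := by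
      intro a
      unfold colHas
      constructor
      · rintro ⟨r2, hr2, hm2⟩
        rw [hother r2 c' (fun hh => h1 hh.2) (fun hh => h2 hh.2)] at hm2
        exact ⟨r2, hr2, hm2⟩
      · rintro ⟨r2, hr2, hm2⟩
        refine ⟨r2, hr2, ?_⟩
        rwa [hother r2 c' (fun hh => h1 hh.2) (fun hh => h2 hh.2)]
    simp only [e1]
  -- element bounds
  have hZge : ∀ b ∈ t' r c, i + 1 ≤ b := by
    intro b hb
    exact hT'.rowWeak r (c - 1) (i + 1) b hprev (by rw [hsucc]; exact hb)
  -- t is an SVT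
  have hT : IsSVT n lam t := by
    refine ⟨?_, ?_, ?_, ?_, ?_⟩
    · intro ra ca h
      by_cases h1 : ra = r ∧ ca = c - 1
      · exact ⟨i, by rw [h1.1, h1.2, hboxm]; exact Finset.mem_erase.mpr ⟨by omega, hip⟩⟩
      · by_cases h2 : ra = r ∧ ca = c
        · exact ⟨i, by rw [h2.1, h2.2, hboxc]; exact Finset.mem_insert_self _ _⟩
        · rw [hother ra ca h1 h2]
          exact hT'.boxNonempty ra ca h
    · intro ra ca h
      by_cases h1 : ra = r ∧ ca = c - 1
      · rw [h1.1, h1.2] at h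
        exact absurd hclamm h
      · by_cases h2 : ra = r ∧ ca = c
        · rw [h2.1, h2.2] at h
          exact absurd hclam h
        · rw [hother ra ca h1 h2]
          exact hT'.emptyOutside ra ca h
    · intro ra ca a ha
      by_cases h1 : ra = r ∧ ca = c - 1
      · rw [h1.1, h1.2, hboxm] at ha
        exact hT'.entryBounds r (c - 1) a (Finset.mem_of_mem_erase ha)
      · by_cases h2 : ra = r ∧ ca = c
        · rw [h2.1, h2.2, hboxc] at ha
          rcases Finset.mem_insert.mp ha with h | h
          · omega
          · exact hT'.entryBounds r c a h
        · rw [hother ra ca h1 h2] at ha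
          exact hT'.entryBounds ra ca a ha
    · intro ra ca a b ha hb
      by_cases hra : ra = r
      · by_cases hc1 : ca = c - 1
        · rw [hra, hc1, hboxm] at ha
          rw [hra, hc1, hsucc, hboxc] at hb
          have haW := Finset.mem_of_mem_erase ha
          have hale : a ≤ i + 1 := hT'.rowWeak r (c - 1) a (i + 1) haW (by rw [hsucc]; exact hi)
          have hane : a ≠ i + 1 := (Finset.mem_erase.mp ha).1
          rcases Finset.mem_insert.mp hb with h | h
          · omega
          · exact hT'.rowWeak r (c - 1) a b haW (by rw [hsucc]; exact h)
        · by_cases hc2 : ca = c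
          · rw [hra, hc2, hboxc] at ha
            rw [hra, hc2, hother r (c + 1) (by omega) (by omega)] at hb
            rcases Finset.mem_insert.mp ha with h | h
            · have h3 : i + 1 ≤ b := hT'.rowWeak r c (i + 1) b hi hb
              omega
            · exact hT'.rowWeak r c a b h hb
          · by_cases hc3 : ca + 1 = c - 1
            · rw [hra, hother r ca (by omega) (by omega)] at ha
              rw [hra, hc3, hboxm] at hb
              exact hT'.rowWeak r ca a b ha (by rw [hc3]; exact Finset.mem_of_mem_erase hb)
            · rw [hra, hother r ca (by omega) (by omega)] at ha
              rw [hra, hother r (ca + 1) (by omega) (by omega)] at hb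
              exact hT'.rowWeak r ca a b ha hb
      · rw [hother ra ca (fun hh => hra hh.1) (fun hh => hra hh.1)] at ha
        rw [hother ra (ca + 1) (fun hh => hra hh.1) (fun hh => hra hh.1)] at hb
        exact hT'.rowWeak ra ca a b ha hb
    · intro ra ca a b ha hb
      by_cases hra : ra = r
      · rw [hra] at ha hb
        rw [hother (r + 1) ca (by omega) (by omega)] at hb
        by_cases hc1 : ca = c - 1
        · rw [hc1, hboxm] at ha
          rw [hc1] at hb
          exact hT'.colStrict r (c - 1) a b (Finset.mem_of_mem_erase ha) hb
        · by_cases hc2 : ca = c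
          · rw [hc2, hboxc] at ha
            rw [hc2] at hb
            rcases Finset.mem_insert.mp ha with h | h
            · have h3 : i + 1 < b := hT'.colStrict r c (i + 1) b hi hb
              omega
            · exact hT'.colStrict r c a b h hb
          · rw [hother r ca (by omega) (by omega)] at ha
            exact hT'.colStrict r ca a b ha hb
      · by_cases hra1 : ra + 1 = r
        · rw [hother ra ca (fun hh => hra hh.1) (fun hh => hra hh.1)] at ha
          rw [hra1] at hb
          by_cases hc1 : ca = c - 1
          · rw [hc1, hboxm] at hb
            rw [hc1] at ha
            exact hT'.colStrict ra (c - 1) a b ha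
              (by rw [hra1]; exact Finset.mem_of_mem_erase hb)
          · by_cases hc2 : ca = c
            · rw [hc2, hboxc] at hb
              rw [hc2] at ha
              rcases Finset.mem_insert.mp hb with h | h
              · have h3 : a < i + 1 := hT'.colStrict ra c a (i + 1) ha (by rw [hra1]; exact hi)
                have h4 : a ≠ i := fun he => hnoi ⟨ra, mem_rowlt hsh hT' ha, he ▸ ha⟩
                omega
              · exact hT'.colStrict ra c a b ha (by rw [hra1]; exact h)
            · rw [hother r ca (by omega) (by omega)] at hb
              rw [← hra1] at hb
              exact hT'.colStrict ra ca a b ha hb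
        · rw [hother ra ca (fun hh => hra hh.1) (fun hh => hra hh.1)] at ha
          rw [hother (ra + 1) ca (fun hh => hra1 hh.1) (fun hh => hra1 hh.1)] at hb
          exact hT'.colStrict ra ca a b ha hb
  -- fBoxCol for t at column c-1
  have hw1 : wseg n t i 0 (c - 1) = wseg n t' i 0 (c - 1) :=
    wseg_congr 0 (c - 1) (fun c' _ h2 => hsignother c' (by omega) (by omega))
  have hw2 : wseg n t i (c + 1) (lam 0 - (c + 1)) = wseg n t' i (c + 1) (lam 0 - (c + 1)) :=
    wseg_congr _ _ (fun c' h1 _ => hsignother c' (by omega) (by omega))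
  have hmt'm : mctr (wseg n t' i 0 (c - 1)) = 0 := by
    have hs : wseg n t' i 0 c = wseg n t' i 0 (c - 1) ++ [] := by
      conv_lhs => rw [show c = (c - 1) + 1 by omega, wseg_append n t' i 0 (c - 1) 1,
        wseg_one, Nat.zero_add, hsignt'm]
      rfl
    have := hch.2.2.1
    rw [hs, List.append_nil] at this
    exact this
  have hfb : fBoxCol n (lam 0) t i (c - 1) := by
    rw [fBoxCol_iff]
    refine ⟨hcm1N, hsignm, by rw [hw1]; exact hmt'm, ?_⟩
    rw [hsucc, show lam 0 - c = (lam 0 - (c + 1)) + 1 by have := hch.1; omega, wseg_succ,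
      hsignc]
    simp only [Option.toList_none, List.nil_append]
    rw [hw2]
    exact hch.2.2.2
  have hmem : i ∈ t r (c - 1) := by rw [hboxm]; exact Finset.mem_erase.mpr ⟨by omega, hip⟩
  have hmemr : i ∈ t r (c - 1 + 1) := by rw [hsucc, hboxc]; exact Finset.mem_insert_self _ _
  have heq : updateBox (updateBox t r (c - 1 + 1) ((t r (c - 1 + 1)).erase i)) r (c - 1)
      (insert (i + 1) (t r (c - 1))) = t' := by
    funext ra ca
    by_cases h1 : ra = r ∧ ca = c - 1
    · rw [h1.1, h1.2, updateBox_self, hboxm]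
      exact Finset.insert_erase hprev
    · rw [updateBox_ne _ _ _ _ h1]
      by_cases h2 : ra = r ∧ ca = c - 1 + 1
      · rw [h2.1, h2.2, updateBox_self, hsucc, hboxc]
        exact Finset.erase_insert hnx
      · rw [updateBox_ne _ _ _ _ h2]
        rw [hsucc] at h2
        exact hother ra ca h1 h2
  refine ⟨hip, hT, ?_⟩
  rw [fRaw_intro hsh hT hfb hrn hmem, if_pos hmemr, heq]

/-! ### Composition: f then e, e then f -/

lemma f_then_e {n : ℕ} {lam : ℕ → ℕ} {i : ℕ} {t t' : Filling}
    (hsh : IsPartitionShape n lam) (hin : i < n) (hT : IsSVT n lam t)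
    (h : fRaw n lam i t = some t') : IsSVT n lam t' ∧ eRaw n lam i t' = some t := by
  obtain ⟨c, r, hfb, hrn, hi, hcase⟩ := fRaw_elim h
  rcases hcase with ⟨hnotr, rfl⟩ | ⟨hi2, rfl⟩
  · obtain ⟨h1, h2, -, -⟩ := f_caseA hsh hT hin hfb hrn hi hnotr
    exact ⟨h1, h2⟩
  · obtain ⟨-, h1, h2, -⟩ := f_caseB hsh hT hin hfb hrn hi hi2
    exact ⟨h1, h2⟩

lemma e_then_f {n : ℕ} {lam : ℕ → ℕ} {i : ℕ} {t t' : Filling}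
    (hsh : IsPartitionShape n lam) (hi1 : 1 ≤ i) (hin : i < n) (hT' : IsSVT n lam t')
    (h : eRaw n lam i t' = some t) : IsSVT n lam t ∧ fRaw n lam i t = some t' := by
  obtain ⟨c, r, heb, hrn, hi, hcase⟩ := eRaw_elim h
  rcases hcase with ⟨hcond, rfl⟩ | ⟨⟨hc0, hprev⟩, rfl⟩
  · obtain ⟨h1, h2, -, -⟩ := e_caseA hsh hT' hi1 hin heb hrn hi hcond
    exact ⟨h1, h2⟩
  · obtain ⟨-, h1, h2⟩ := e_caseB hsh hT' hi1 hin heb hrn hi hc0 hprev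
    exact ⟨h1, h2⟩

/-! ### Effect of f on the sign word -/

lemma wseg_split0 {n N : ℕ} {u : Filling} {i c : ℕ} (hc : c < N) :
    wseg n u i 0 N = wseg n u i 0 c ++ (colSign n u i c).toList ++
      wseg n u i (c + 1) (N - (c + 1)) := by
  have := wseg_split n u i 0 N c (by omega) (by omega)
  rwa [Nat.sub_zero, Nat.zero_add] at this

lemma f_word {n : ℕ} {lam : ℕ → ℕ} {i : ℕ} {t t' : Filling}
    (hsh : IsPartitionShape n lam) (hin : i < n) (hT : IsSVT n lam t)
    (h : fRaw n lam i t = some t') :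
    ∃ w₁ w₂, wseg n t i 0 (lam 0) = w₁ ++ true :: w₂ ∧
      wseg n t' i 0 (lam 0) = w₁ ++ false :: w₂ ∧ mctr w₁ = 0 ∧ pctr w₂ = 0 := by
  obtain ⟨c, r, hfb, hrn, hi, hcase⟩ := fRaw_elim h
  have hch := (fBoxCol_iff n (lam 0) t i c).mp hfb
  rcases hcase with ⟨hnotr, rfl⟩ | ⟨hi2, rfl⟩
  · obtain ⟨-, -, hsign', hsignother⟩ := f_caseA hsh hT hin hfb hrn hi hnotr
    set t' := updateBox t r c (insert (i + 1) ((t r c).erase i)) with ht'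
    refine ⟨wseg n t i 0 c, wseg n t i (c + 1) (lam 0 - (c + 1)),
      fullword_split_f hfb, ?_, hch.2.2.1, hch.2.2.2⟩
    rw [wseg_split0 hch.1, hsign']
    have hw1 : wseg n t' i 0 c = wseg n t i 0 c :=
      wseg_congr 0 c (fun c' _ h2 => hsignother c' (by omega))
    have hw2 : wseg n t' i (c + 1) (lam 0 - (c + 1)) =
        wseg n t i (c + 1) (lam 0 - (c + 1)) :=
      wseg_congr _ _ (fun c' h1 _ => hsignother c' (by omega))
    rw [hw1, hw2]
    simp
  · obtain ⟨hi1p, -, -, hsignc', hsignc1', hsignt1, hc1N, hsignother⟩ :=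
      f_caseB hsh hT hin hfb hrn hi hi2
    set t' := updateBox (updateBox t r (c + 1) ((t r (c + 1)).erase i)) r c
      (insert (i + 1) (t r c)) with ht'
    have htail : wseg n t i (c + 1) (lam 0 - (c + 1)) =
        wseg n t i (c + 2) (lam 0 - (c + 2)) := by
      rw [show lam 0 - (c + 1) = (lam 0 - (c + 2)) + 1 by omega, wseg_succ, hsignt1]
      simp
    refine ⟨wseg n t i 0 c, wseg n t i (c + 2) (lam 0 - (c + 2)), ?_, ?_,
      hch.2.2.1, by rw [← htail]; exact hch.2.2.2⟩
    · rw [fullword_split_f hfb, htail]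
    · rw [wseg_split0 hch.1, hsignc']
      have hw1 : wseg n t' i 0 c = wseg n t i 0 c :=
        wseg_congr 0 c (fun c' _ h2 => hsignother c' (by omega) (by omega))
      have hw2 : wseg n t' i (c + 2) (lam 0 - (c + 2)) =
          wseg n t i (c + 2) (lam 0 - (c + 2)) :=
        wseg_congr _ _ (fun c' h1 _ => hsignother c' (by omega) (by omega))
      have htail' : wseg n t' i (c + 1) (lam 0 - (c + 1)) =
          false :: wseg n t' i (c + 2) (lam 0 - (c + 2)) := by
        rw [show lam 0 - (c + 1) = (lam 0 - (c + 2)) + 1 by omega, wseg_succ, hsignc1']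
        simp
      rw [hw1, htail', hw2]
      simp

lemma f_counts {n : ℕ} {lam : ℕ → ℕ} {i : ℕ} {t t' : Filling}
    (hsh : IsPartitionShape n lam) (hin : i < n) (hT : IsSVT n lam t)
    (h : fRaw n lam i t = some t') :
    pctr (wseg n t' i 0 (lam 0)) + 1 = pctr (wseg n t i 0 (lam 0)) ∧
    mctr (wseg n t' i 0 (lam 0)) = mctr (wseg n t i 0 (lam 0)) + 1 := by
  obtain ⟨w₁, w₂, h1, h2, h3, h4⟩ := f_word hsh hin hT h
  rw [h1, h2, flip_pctr_t _ _ h3 h4, flip_pctr_f _ _ h4, flip_mctr_t _ _ h3,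
    flip_mctr_f _ _ h3 h4]
  exact ⟨rfl, rfl⟩

lemma e_counts {n : ℕ} {lam : ℕ → ℕ} {i : ℕ} {t t' : Filling}
    (hsh : IsPartitionShape n lam) (hi1 : 1 ≤ i) (hin : i < n) (hT' : IsSVT n lam t')
    (h : eRaw n lam i t' = some t) :
    mctr (wseg n t i 0 (lam 0)) + 1 = mctr (wseg n t' i 0 (lam 0)) ∧
    pctr (wseg n t i 0 (lam 0)) = pctr (wseg n t' i 0 (lam 0)) + 1 := by
  obtain ⟨hT, hf⟩ := e_then_f hsh hi1 hin hT' h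
  have := f_counts hsh hin hT hf
  omega

/-! ### Applicability of the operators -/

lemma f_some {n : ℕ} {lam : ℕ → ℕ} {i : ℕ} {t : Filling}
    (hsh : IsPartitionShape n lam) (hT : IsSVT n lam t)
    (h : 0 < pctr (wseg n t i 0 (lam 0))) : ∃ t', fRaw n lam i t = some t' := by
  obtain ⟨c, hfb⟩ := fBox_exists n (lam 0) t i h
  have hsgn : colSign n t i c = some true := ((plusCol_iff n (lam 0) t i c).mp hfb.1).2.1
  obtain ⟨⟨r, hrn, hi⟩, -⟩ := colSign_true_elim hsgn
  rw [fRaw_intro hsh hT hfb hrn hi]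
  split <;> exact ⟨_, rfl⟩

lemma e_some {n : ℕ} {lam : ℕ → ℕ} {i : ℕ} {t : Filling}
    (hsh : IsPartitionShape n lam) (hT : IsSVT n lam t)
    (h : 0 < mctr (wseg n t i 0 (lam 0))) : ∃ t', eRaw n lam i t = some t' := by
  obtain ⟨c, heb⟩ := eBox_exists n (lam 0) t i h
  have hsgn : colSign n t i c = some false := ((minusCol_iff n (lam 0) t i c).mp heb.1).2.1
  obtain ⟨⟨r, hrn, hi⟩, -⟩ := colSign_false_elim hsgn
  rw [eRaw_intro hsh hT heb hrn hi]
  split <;> exact ⟨_, rfl⟩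

lemma f_none' {n : ℕ} {lam : ℕ → ℕ} {i : ℕ} {t : Filling}
    (h : pctr (wseg n t i 0 (lam 0)) = 0) : fRaw n lam i t = none := by
  refine fRaw_none ?_
  rintro ⟨c, hfb⟩
  have := pctr_pos_of_fBox hfb
  omega

lemma e_none' {n : ℕ} {lam : ℕ → ℕ} {i : ℕ} {t : Filling}
    (h : mctr (wseg n t i 0 (lam 0)) = 0) : eRaw n lam i t = none := by
  refine eRaw_none ?_
  rintro ⟨c, heb⟩
  have := mctr_pos_of_eBox heb
  omega

/-! ### Weight lemmas -/

lemma wt_congr {n : ℕ} {lam : ℕ → ℕ} {t t' : Filling} {j : ℕ}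
    (hiff : ∀ r c, r < n → c < lam 0 → (j ∈ t' r c ↔ j ∈ t r c)) :
    wt n lam t' j = wt n lam t j := by
  unfold wt
  congr 1
  apply Finset.filter_congr
  intro p hp
  rw [Finset.mem_product, Finset.mem_range, Finset.mem_range] at hp
  first
  | exact hiff p.1 p.2 hp.1 hp.2
  | exact propext (hiff p.1 p.2 hp.1 hp.2)

lemma wt_update_erase {n : ℕ} {lam : ℕ → ℕ} {t t' : Filling} {j r0 c0 : ℕ}
    (hr0 : r0 < n) (hc0 : c0 < lam 0)
    (hiff : ∀ r c, r < n → c < lam 0 → ¬ (r = r0 ∧ c = c0) → (j ∈ t' r c ↔ j ∈ t r c))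
    (hout : j ∉ t' r0 c0) (hin0 : j ∈ t r0 c0) :
    wt n lam t' j + 1 = wt n lam t j := by
  unfold wt
  have hmem : (r0, c0) ∈ (Finset.range n ×ˢ Finset.range (lam 0)).filter
      (fun p => j ∈ t p.1 p.2) := by
    rw [Finset.mem_filter, Finset.mem_product, Finset.mem_range, Finset.mem_range]
    exact ⟨⟨hr0, hc0⟩, hin0⟩
  have hset : (Finset.range n ×ˢ Finset.range (lam 0)).filter (fun p => j ∈ t' p.1 p.2) =
      ((Finset.range n ×ˢ Finset.range (lam 0)).filter (fun p => j ∈ t p.1 p.2)).erase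
        (r0, c0) := by
    ext ⟨pr, pc⟩
    simp only [Finset.mem_erase, Finset.mem_filter, Finset.mem_product, Finset.mem_range,
      Prod.mk.injEq, ne_eq]
    constructor
    · rintro ⟨⟨h1, h2⟩, h3⟩
      by_cases hpe : pr = r0 ∧ pc = c0
      · rw [hpe.1, hpe.2] at h3
        exact absurd h3 hout
      · exact ⟨fun hh => hpe hh, ⟨h1, h2⟩, (hiff pr pc h1 h2 hpe).mp h3⟩
    · rintro ⟨hne, ⟨h1, h2⟩, h3⟩
      exact ⟨⟨h1, h2⟩, (hiff pr pc h1 h2 (fun hh => hne ⟨hh.1, hh.2⟩)).mpr h3⟩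
  rw [hset, Finset.card_erase_of_mem hmem]
  have hpos : 0 < ((Finset.range n ×ˢ Finset.range (lam 0)).filter
      (fun p => j ∈ t p.1 p.2)).card := Finset.card_pos.mpr ⟨(r0, c0), hmem⟩
  omega

lemma wt_update_insert {n : ℕ} {lam : ℕ → ℕ} {t t' : Filling} {j r0 c0 : ℕ}
    (hr0 : r0 < n) (hc0 : c0 < lam 0)
    (hiff : ∀ r c, r < n → c < lam 0 → ¬ (r = r0 ∧ c = c0) → (j ∈ t' r c ↔ j ∈ t r c))
    (hout : j ∉ t r0 c0) (hin0 : j ∈ t' r0 c0) :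
    wt n lam t' j = wt n lam t j + 1 := by
  have := wt_update_erase (t := t') (t' := t) hr0 hc0
    (fun r c h1 h2 h3 => (hiff r c h1 h2 h3).symm) hout hin0
  omega

lemma f_wt {n : ℕ} {lam : ℕ → ℕ} {i : ℕ} {t t' : Filling}
    (hsh : IsPartitionShape n lam) (hin : i < n) (hT : IsSVT n lam t)
    (h : fRaw n lam i t = some t') :
    wt n lam t' i + 1 = wt n lam t i ∧
    wt n lam t' (i + 1) = wt n lam t (i + 1) + 1 ∧
    ∀ j, j ≠ i → j ≠ i + 1 → wt n lam t' j = wt n lam t j := by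
  obtain ⟨c, r, hfb, hrn, hi, hcase⟩ := fRaw_elim h
  have hsgn : colSign n t i c = some true := ((plusCol_iff n (lam 0) t i c).mp hfb.1).2.1
  obtain ⟨hhas, hno⟩ := colSign_true_elim hsgn
  have hnx : (i + 1) ∉ t r c := fun hmem => hno ⟨r, hrn, hmem⟩
  have hcN : c < lam 0 := hfb.1.1
  rcases hcase with ⟨hnotr, rfl⟩ | ⟨hi2, rfl⟩
  · set t' := updateBox t r c (insert (i + 1) ((t r c).erase i)) with ht'
    have hbox : t' r c = insert (i + 1) ((t r c).erase i) := updateBox_self t r c _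
    have hother : ∀ r' c', ¬ (r' = r ∧ c' = c) → t' r' c' = t r' c' :=
      fun r' c' hh => updateBox_ne t r c _ hh
    refine ⟨?_, ?_, ?_⟩
    · refine wt_update_erase hrn hcN (fun ra ca h1 h2 h3 => by rw [hother ra ca h3]) ?_ hi
      rw [hbox]
      simp only [Finset.mem_insert, Finset.mem_erase]
      omega
    · refine wt_update_insert hrn hcN (fun ra ca h1 h2 h3 => by rw [hother ra ca h3]) hnx ?_
      rw [hbox]
      exact Finset.mem_insert_self _ _
    · intro j hj1 hj2
      refine wt_congr (fun ra ca h1 h2 => ?_)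
      by_cases h3 : ra = r ∧ ca = c
      · rw [h3.1, h3.2, hbox]
        simp only [Finset.mem_insert, Finset.mem_erase]
        constructor
        · rintro (h | h)
          · omega
          · exact h.2
        · intro h
          exact Or.inr ⟨hj1, h⟩
      · rw [hother ra ca h3]
  · obtain ⟨hi1p, -, -, -, -, -, hc1N, -⟩ := f_caseB hsh hT hin hfb hrn hi hi2
    set t' := updateBox (updateBox t r (c + 1) ((t r (c + 1)).erase i)) r c
      (insert (i + 1) (t r c)) with ht'
    have hboxc : t' r c = insert (i + 1) (t r c) := updateBox_self _ r c _
    have hboxc1 : t' r (c + 1) = (t r (c + 1)).erase i := by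
      rw [ht', updateBox_ne _ _ _ _ (by omega : ¬ (r = r ∧ c + 1 = c))]
      exact updateBox_self _ _ _ _
    have hother : ∀ r' c', ¬ (r' = r ∧ c' = c) → ¬ (r' = r ∧ c' = c + 1) →
        t' r' c' = t r' c' := by
      intro r' c' h1 h2
      rw [ht', updateBox_ne _ _ _ _ h1, updateBox_ne _ _ _ _ h2]
    refine ⟨?_, ?_, ?_⟩
    · refine wt_update_erase hrn hc1N (c0 := c + 1) (fun ra ca h1 h2 h3 => ?_) ?_ hi2
      · by_cases h4 : ra = r ∧ ca = c
        · rw [h4.1, h4.2, hboxc]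
          simp only [Finset.mem_insert]
          constructor
          · rintro (h | h)
            · omega
            · exact h
          · exact Or.inr
        · rw [hother ra ca h4 h3]
      · rw [hboxc1]
        intro hmem
        exact (Finset.mem_erase.mp hmem).1 rfl
    · refine wt_update_insert hrn hcN (c0 := c) (fun ra ca h1 h2 h3 => ?_) hnx ?_
      · by_cases h4 : ra = r ∧ ca = c + 1
        · rw [h4.1, h4.2, hboxc1]
          simp only [Finset.mem_erase]
          constructor
          · exact fun h => h.2
          · intro h
            exact ⟨by omega, h⟩
        · rw [hother ra ca h3 h4]
      · rw [hboxc]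
        exact Finset.mem_insert_self _ _
    · intro j hj1 hj2
      refine wt_congr (fun ra ca h1 h2 => ?_)
      by_cases h3 : ra = r ∧ ca = c
      · rw [h3.1, h3.2, hboxc]
        simp only [Finset.mem_insert]
        constructor
        · rintro (h | h)
          · omega
          · exact h
        · exact Or.inr
      · by_cases h4 : ra = r ∧ ca = c + 1
        · rw [h4.1, h4.2, hboxc1]
          simp only [Finset.mem_erase]
          constructor
          · exact fun h => h.2
          · intro h
            exact ⟨hj1, h⟩
        · rw [hother ra ca h3 h4]

/-! ### Iteration machinery -/

lemma iterOpt_succ' (g : Filling → Option Filling) (m : ℕ) (t : Filling) :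
    iterOpt g (m + 1) t = (iterOpt g m t).bind g := rfl

lemma iter_some_of_le (g : Filling → Option Filling) (μ : Filling → ℕ) (inv : Filling → Prop)
    (hstep : ∀ u, inv u → 0 < μ u → ∃ v, g u = some v ∧ inv v ∧ μ v + 1 = μ u) :
    ∀ m u, inv u → m ≤ μ u → ∃ v, iterOpt g m u = some v ∧ inv v ∧ μ v + m = μ u := by
  intro m
  induction m with
  | zero => exact fun u hu _ => ⟨u, rfl, hu, by omega⟩
  | succ m ih =>
    intro u hu hm
    obtain ⟨v, h1, h2, h3⟩ := ih u hu (by omega)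
    obtain ⟨w, h4, h5, h6⟩ := hstep v h2 (by omega)
    refine ⟨w, ?_, h5, by omega⟩
    rw [iterOpt_succ', h1]
    exact h4

lemma iter_none_of_gt (g : Filling → Option Filling) (μ : Filling → ℕ) (inv : Filling → Prop)
    (hstep : ∀ u, inv u → 0 < μ u → ∃ v, g u = some v ∧ inv v ∧ μ v + 1 = μ u)
    (hnone : ∀ u, inv u → μ u = 0 → g u = none) :
    ∀ m u, inv u → μ u < m → iterOpt g m u = none := by
  intro m
  induction m with
  | zero => intro u _ h; omega
  | succ m ih =>
    intro u hu hm
    rw [iterOpt_succ']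
    rcases Nat.lt_or_ge (μ u) m with h | h
    · rw [ih u hu h]
      rfl
    · obtain ⟨v, h1, h2, h3⟩ := iter_some_of_le g μ inv hstep m u hu (by omega)
      rw [h1]
      exact hnone v h2 (by omega)

/-! ### Counting identity -/

lemma colSign_true_iff' {n : ℕ} {t : Filling} {i c : ℕ} :
    colSign n t i c = some true ↔ colHas n t i c ∧ ¬ colHas n t (i + 1) c :=
  ⟨colSign_true_elim, fun h => colSign_eq_true h.1 h.2⟩

lemma colSign_false_iff' {n : ℕ} {t : Filling} {i c : ℕ} :
    colSign n t i c = some false ↔ colHas n t (i + 1) c ∧ ¬ colHas n t i c :=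
  ⟨colSign_false_elim, fun h => colSign_eq_false h.1 h.2⟩

lemma count_wseg {n : ℕ} {t : Filling} {i : ℕ} (y : Bool) :
    ∀ m, (wseg n t i 0 m).count y =
      ((Finset.range m).filter (fun c => colSign n t i c = some y)).card := by
  intro m
  induction m with
  | zero => simp [wseg_zero]
  | succ m ih =>
    rw [wseg_append n t i 0 m 1, Nat.zero_add, wseg_one, List.count_append,
      Finset.range_add_one, Finset.filter_insert]
    cases hs : colSign n t i m with
    | none => simp [ih]
    | some y' =>
      by_cases hy : y' = y
      · subst hy
        rw [if_pos rfl, Finset.card_insert_of_notMem (by simp)]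
        simp [ih]
      · rw [if_neg (by simp [hy])]
        simp [ih, List.count_cons, hy]

lemma wt_colcount {n : ℕ} {lam : ℕ → ℕ} {t : Filling}
    (hsh : IsPartitionShape n lam) (hT : IsSVT n lam t) (j : ℕ) :
    wt n lam t j = ((Finset.range (lam 0)).filter (fun c => colHas n t j c)).card := by
  unfold wt
  apply Finset.card_bij (fun p _ => p.2)
  · intro p hp
    rw [Finset.mem_filter, Finset.mem_product] at hp
    rw [Finset.mem_filter]
    refine ⟨hp.1.2, ⟨p.1, ?_, hp.2⟩⟩
    have := hp.1.1
    rwa [Finset.mem_range] at this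
  · intro p1 hp1 p2 hp2 he
    rw [Finset.mem_filter, Finset.mem_product] at hp1 hp2
    have hm2 : j ∈ t p2.1 p1.2 := by rw [he]; exact hp2.2
    have h1 : p1.1 = p2.1 := row_unique hsh hT hp1.2 hm2
    exact Prod.ext h1 he
  · intro c hc
    rw [Finset.mem_filter] at hc
    obtain ⟨hcr, r, hrn, hm⟩ := hc
    refine ⟨(r, c), ?_, rfl⟩
    rw [Finset.mem_filter, Finset.mem_product]
    refine ⟨⟨?_, hcr⟩, hm⟩
    rw [Finset.mem_range]
    exact hrn

lemma counts_id {n : ℕ} {lam : ℕ → ℕ} {i : ℕ} {t : Filling}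
    (hsh : IsPartitionShape n lam) (hT : IsSVT n lam t) :
    (pctr (wseg n t i 0 (lam 0)) : ℤ) - mctr (wseg n t i 0 (lam 0)) =
      (wt n lam t i : ℤ) - wt n lam t (i + 1) := by
  have hid := pctr_mctr (wseg n t i 0 (lam 0))
  have hct := count_wseg (n := n) (t := t) (i := i) true (lam 0)
  have hcf := count_wseg (n := n) (t := t) (i := i) false (lam 0)
  have hwti := wt_colcount hsh hT i
  have hwti1 := wt_colcount hsh hT (i + 1)
  have he1 : (Finset.range (lam 0)).filter (fun c => colSign n t i c = some true) =
      (Finset.range (lam 0)).filter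
        (fun c => colHas n t i c ∧ ¬ colHas n t (i + 1) c) := by
    apply Finset.filter_congr
    intro c _
    first
    | exact colSign_true_iff'
    | exact propext colSign_true_iff'
  have he2 : (Finset.range (lam 0)).filter (fun c => colSign n t i c = some false) =
      (Finset.range (lam 0)).filter
        (fun c => colHas n t (i + 1) c ∧ ¬ colHas n t i c) := by
    apply Finset.filter_congr
    intro c _
    first
    | exact colSign_false_iff'
    | exact propext colSign_false_iff'
  have hsplit1 := Finset.card_filter_add_card_filter_not
    (s := (Finset.range (lam 0)).filter (fun c => colHas n t i c))
    (p := fun c => colHas n t (i + 1) c)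
  rw [Finset.filter_filter, Finset.filter_filter] at hsplit1
  have hsplit2 := Finset.card_filter_add_card_filter_not
    (s := (Finset.range (lam 0)).filter (fun c => colHas n t (i + 1) c))
    (p := fun c => colHas n t i c)
  rw [Finset.filter_filter, Finset.filter_filter] at hsplit2
  have hboth : (Finset.range (lam 0)).filter
      (fun c => colHas n t i c ∧ colHas n t (i + 1) c) =
      (Finset.range (lam 0)).filter
        (fun c => colHas n t (i + 1) c ∧ colHas n t i c) := by
    apply Finset.filter_congr
    intro c _
    first
    | exact and_comm
    | exact propext and_comm
  have hbothc := congrArg Finset.card hboth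
  rw [he1] at hct
  rw [he2] at hcf
  rw [hwti, hwti1]
  push_cast
  omega

/-- `SVT^n(λ)` with `e_i`, `f_i` and `wt` is an abstract
`U_q(sl_n)`-crystal: (1) `f_i T = T' ↔ e_i T' = T`; (2) applying `f_i` changes the weight
by `-α_i`; (3) `ε_i` and `φ_i` are finite and `φ_i(T) = ε_i(T) + wt(T)_i - wt(T)_{i+1}`. -/
theorem svt_abstract_crystal (n : ℕ) (lam : ℕ → ℕ) (hlam : IsPartitionShape n lam)
    (i : ℕ) (hi1 : 1 ≤ i) (hin : i < n) :
    (∀ t t' : Filling, IsSVT n lam t → IsSVT n lam t' →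
      (fRaw n lam i t = some t' ↔ eRaw n lam i t' = some t)) ∧
    (∀ t t' : Filling, IsSVT n lam t → fRaw n lam i t = some t' →
      wt n lam t' i + 1 = wt n lam t i ∧
      wt n lam t' (i + 1) = wt n lam t (i + 1) + 1 ∧
      ∀ j, j ≠ i → j ≠ i + 1 → wt n lam t' j = wt n lam t j) ∧
    (∀ t : Filling, IsSVT n lam t → ∃ E F : ℕ,
      (∀ m, iterOpt (eRaw n lam i) m t ≠ none ↔ m ≤ E) ∧
      (∀ m, iterOpt (fRaw n lam i) m t ≠ none ↔ m ≤ F) ∧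
      (F : ℤ) = (E : ℤ) + (wt n lam t i : ℤ) - (wt n lam t (i + 1) : ℤ)) := by
  refine ⟨?_, ?_, ?_⟩
  · intro t t' hT hT'
    constructor
    · intro h
      exact (f_then_e hlam hin hT h).2
    · intro h
      exact (e_then_f hlam hi1 hin hT' h).2
  · intro t t' hT h
    exact f_wt hlam hin hT h
  · intro t hT
    have hstepE : ∀ u, IsSVT n lam u → 0 < mctr (wseg n u i 0 (lam 0)) →
        ∃ v, eRaw n lam i u = some v ∧ IsSVT n lam v ∧
          mctr (wseg n v i 0 (lam 0)) + 1 = mctr (wseg n u i 0 (lam 0)) := by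
      intro u hu h
      obtain ⟨v, hv⟩ := e_some hlam hu h
      exact ⟨v, hv, (e_then_f hlam hi1 hin hu hv).1, (e_counts hlam hi1 hin hu hv).1⟩
    have hstepF : ∀ u, IsSVT n lam u → 0 < pctr (wseg n u i 0 (lam 0)) →
        ∃ v, fRaw n lam i u = some v ∧ IsSVT n lam v ∧
          pctr (wseg n v i 0 (lam 0)) + 1 = pctr (wseg n u i 0 (lam 0)) := by
      intro u hu h
      obtain ⟨v, hv⟩ := f_some hlam hu h
      exact ⟨v, hv, (f_then_e hlam hin hu hv).1, (f_counts hlam hin hu hv).1⟩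
    have hnoneE : ∀ u, IsSVT n lam u → mctr (wseg n u i 0 (lam 0)) = 0 →
        eRaw n lam i u = none := fun u _ h => e_none' h
    have hnoneF : ∀ u, IsSVT n lam u → pctr (wseg n u i 0 (lam 0)) = 0 →
        fRaw n lam i u = none := fun u _ h => f_none' h
    refine ⟨mctr (wseg n t i 0 (lam 0)), pctr (wseg n t i 0 (lam 0)), ?_, ?_, ?_⟩
    · intro m
      constructor
      · intro hne
        by_contra hgt
        push_neg at hgt
        exact hne (iter_none_of_gt _ _ _ hstepE hnoneE m t hT hgt)
      · intro hle
        obtain ⟨v, h1, -, -⟩ :=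
          iter_some_of_le _ _ (IsSVT n lam) hstepE m t hT hle
        rw [h1]
        simp
    · intro m
      constructor
      · intro hne
        by_contra hgt
        push_neg at hgt
        exact hne (iter_none_of_gt _ _ _ hstepF hnoneF m t hT hgt)
      · intro hle
        obtain ⟨v, h1, -, -⟩ :=
          iter_some_of_le _ _ (IsSVT n lam) hstepF m t hT hle
        rw [h1]
        simp
    · have := counts_id (i := i) hlam hT
      omega

end SVTCrystal

end
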